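/- arXiv:2310.03637 — 4 statements merged into one kernel-verified Lean document; each statement's English description precedes it below -/
import Mathlib

section
/- Let K be a field, let n ≥ 2, and let f_1,…,f_n ∈ K[x_1,…,x_{n−1},y] be a univariate keyed iterated polynomial system such that d_i := deg f_i ≥ 2 for all 1 ≤ i ≤ n and the monomial x_{i−1}^{d_i} occurs in f_i for all 2 ≤ i ≤ n. With ĝ_1 = g_1(p,y), ĝ_i = g_i(ĝ_{i−1}(y), y) for 2 ≤ i ≤ n−1 and ĝ_n = g_n(ĝ_{n−1}(y), y) − c in K[y], one has deg ĝ_i = ∏_{k=1}^{i} d_k for all 1 ≤ i ≤ n. -/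
open MvPolynomial
open Fin.NatCast

/-! ### Term orders, initial ideals and Gröbner bases -/

/-- Total degree of an exponent vector. -/
def expDeg {σ : Type*} (a : σ →₀ ℕ) : ℕ := a.sum fun _ e => e

/-- Degree reverse lexicographic strict order on exponent vectors; `sig j i` reads
"`j` is strictly less significant than `i`".  `a` is DRL-smaller than `b` iff its total degree
is smaller, or the degrees agree and at the least significant variable where they differ the
exponent of `a` is larger. -/
def drlLT {σ : Type*} (sig : σ → σ → Prop) (a b : σ →₀ ℕ) : Prop :=
  expDeg a < expDeg b ∨
    (expDeg a = expDeg b ∧ ∃ i, b i < a i ∧ ∀ j, sig j i → a j = b j)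

/-- Lexicographic strict order on exponent vectors; `sig i j` reads "`i` is strictly less
significant than `j`".  `a` is LEX-smaller than `b` iff at the most significant variable where
they differ the exponent of `a` is smaller. -/
def lexLT {σ : Type*} (sig : σ → σ → Prop) (a b : σ →₀ ℕ) : Prop :=
  ∃ i, a i < b i ∧ ∀ j, sig i j → a j = b j

/-- Significance relation on `Fin N` for which the variable significance is strictly
decreasing in the index (`x_0 > x_1 > ⋯`):  `sigDes i j` iff `i` is less significant
than `j`, i.e. `j < i`. -/
def sigDes {N : ℕ} (i j : Fin N) : Prop := j < i

/-- Significance relation on `Fin (N+1)` for a homogenized polynomial ring: the homogenization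
variable `x_0` (index `0`) is the least significant variable, and among the remaining variables
the significance is strictly decreasing in the index. -/
def sigH {N : ℕ} (i j : Fin (N + 1)) : Prop := j ≠ 0 ∧ (i = 0 ∨ j < i)

/-- `a` is the leading monomial (exponent vector) of `f` w.r.t. the strict term order `lt`. -/
def IsLeadMono {σ K : Type*} [CommSemiring K] (lt : (σ →₀ ℕ) → (σ →₀ ℕ) → Prop)
    (f : MvPolynomial σ K) (a : σ →₀ ℕ) : Prop :=
  a ∈ f.support ∧ ∀ b ∈ f.support, b ≠ a → lt b a

/-- The initial ideal of `I` w.r.t. the strict term order `lt`: the ideal generated by the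
leading monomials of the nonzero elements of `I`. -/
noncomputable def initialIdeal {σ K : Type*} [CommSemiring K]
    (lt : (σ →₀ ℕ) → (σ →₀ ℕ) → Prop) (I : Ideal (MvPolynomial σ K)) :
    Ideal (MvPolynomial σ K) :=
  Ideal.span {mf | ∃ f ∈ I, f ≠ 0 ∧ ∃ a, IsLeadMono lt f a ∧ mf = monomial a (1 : K)}

/-- `G` is a Gröbner basis of `I` w.r.t. the strict term order `lt`: `G ⊆ I` and the leading
monomials of the elements of `G` generate the initial ideal of `I`. -/
def IsGroebner {σ K : Type*} [CommSemiring K] (lt : (σ →₀ ℕ) → (σ →₀ ℕ) → Prop)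
    (G : Set (MvPolynomial σ K)) (I : Ideal (MvPolynomial σ K)) : Prop :=
  G ⊆ (I : Set (MvPolynomial σ K)) ∧
    Ideal.span {mf | ∃ g ∈ G, g ≠ 0 ∧ ∃ a, IsLeadMono lt g a ∧ mf = monomial a (1 : K)}
      = initialIdeal lt I

/-! ### Saturation, projective zero loci, generic coordinates, homogenization -/

/-- The saturation `I : (x_0, …, x_n)^∞ = ⋃_k (I : (x_0, …, x_n)^k)` of an ideal of a
polynomial ring with respect to the maximal ideal generated by all the variables. -/
noncomputable def maxSat {K : Type*} [Field K] {σ : Type*}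
    (I : Ideal (MvPolynomial σ K)) : Ideal (MvPolynomial σ K) :=
  ⨆ k : ℕ, Submodule.colon I
    (((Ideal.span (Set.range (X : σ → MvPolynomial σ K))) ^ k : Ideal (MvPolynomial σ K)) :
      Set (MvPolynomial σ K))

/-- The projective zero locus of `I` over the algebraic closure of `K`. -/
noncomputable def projZerosBar {K : Type*} [Field K] {σ : Type*}
    (I : Ideal (MvPolynomial σ K)) :
    Set (Projectivization (AlgebraicClosure K) (σ → AlgebraicClosure K)) :=
  {x | ∀ f ∈ I, eval x.rep (map (algebraMap K (AlgebraicClosure K)) f) = 0}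

/-- `I` is in generic coordinates (w.r.t. the homogenization variable `v0`): its projective zero
locus over the algebraic closure is finite, and either it is empty or `X v0` is a nonzerodivisor
modulo the saturation `I^sat`. -/
def GenCoords {K : Type*} [Field K] {σ : Type*} (v0 : σ)
    (I : Ideal (MvPolynomial σ K)) : Prop :=
  (projZerosBar I).Finite ∧
    (projZerosBar I = ∅ ∨ ∀ f, X v0 * f ∈ maxSat I → f ∈ maxSat I)

/-- Homogenization of `f` with respect to a new variable `x_0` placed at index `0`; the original
variables are shifted along `Fin.succ`. -/
noncomputable def homogPoly {K : Type*} [CommSemiring K] {q : ℕ}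
    (f : MvPolynomial (Fin q) K) : MvPolynomial (Fin (q + 1)) K :=
  f.support.sum fun a =>
    monomial (Finsupp.single (0 : Fin (q + 1)) (f.totalDegree - expDeg a)
      + a.mapDomain Fin.succ) (f.coeff a)

/-- Dehomogenization: substitute `x_0 ↦ 1` and shift the remaining variables back. -/
noncomputable def dehomAlg {K : Type*} [Field K] (n : ℕ) :
    MvPolynomial (Fin (n + 1)) K →ₐ[K] MvPolynomial (Fin n) K :=
  aeval fun i => Fin.cases (1 : MvPolynomial (Fin n) K) (fun j => X j) i

/-- An ideal of a polynomial ring is homogeneous if it contains all homogeneous components of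
its elements. -/
def IsHomogIdeal {σ K : Type*} [CommSemiring K] (I : Ideal (MvPolynomial σ K)) : Prop :=
  ∀ f ∈ I, ∀ d : ℕ, MvPolynomial.homogeneousComponent d f ∈ I

/-- The highest degree homogeneous component `f^top` of a polynomial. -/
noncomputable def topComp {σ K : Type*} [CommSemiring K] (f : MvPolynomial σ K) :
    MvPolynomial σ K :=
  MvPolynomial.homogeneousComponent f.totalDegree f

/-! ### Keyed iterated polynomial systems -/

/-- The univariate keyed iterated polynomial system attached to the bivariate polynomials
`g_1, …, g_n` (with `n = m + 1`, indexed here by `k = 0, …, m`), the plaintext `p` and the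
ciphertext `c`.  The ambient ring is `K[x_1, …, x_m, y]`, where `x_j` has variable index
`j - 1` and `y` has variable index `m`; in the bivariate ring `K[x, y]`, `x` has index `0`
and `y` has index `1`.  Explicitly, `keyedF m g p c 0 = g 1 (p, y) - x 1`,
`keyedF m g p c k = g (k+1) (x k, y) - x (k+1)` for `1 ≤ k ≤ m - 1` and
`keyedF m g p c m = g (m+1) (x m, y) - c`. -/
noncomputable def keyedF {K : Type*} [Field K] (m : ℕ)
    (g : ℕ → MvPolynomial (Fin 2) K) (p c : K) (k : ℕ) :
    MvPolynomial (Fin (m + 1)) K :=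
  aeval ![if k = 0 then C p else X (((k - 1 : ℕ)) : Fin (m + 1)),
          X ((m : ℕ) : Fin (m + 1))] (g k)
    - (if k < m then X ((k : ℕ) : Fin (m + 1)) else C c)

/-- The chain `ĝ_1 = g_1(p, y)`, `ĝ_{k+1} = g_{k+1}(ĝ_k(y), y)` of univariate polynomials
(0-based indexing: `ghat g p k = ĝ_{k+1}`). -/
noncomputable def ghat {K : Type*} [Field K] (g : ℕ → MvPolynomial (Fin 2) K)
    (p : K) : ℕ → Polynomial K
  | 0 => aeval ![Polynomial.C p, Polynomial.X] (g 0)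
  | (k + 1) => aeval ![ghat g p k, Polynomial.X] (g (k + 1))

/-- Embed a univariate polynomial into `K[x_1, …, x_m, y]` via the variable `y`. -/
noncomputable def yPoly {K : Type*} [Field K] (m : ℕ) (q : Polynomial K) :
    MvPolynomial (Fin (m + 1)) K :=
  Polynomial.aeval (X ((m : ℕ) : Fin (m + 1))) q

/-- The (monic, up to a unit) greatest common divisor of two univariate polynomials over a
field. -/
noncomputable def polyGCD {K : Type*} [Field K] (f g : Polynomial K) : Polynomial K :=
  @EuclideanDomain.gcd _ _ (Classical.decEq _) f g

/-- The number of distinct roots of a univariate polynomial in the base field. -/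
noncomputable def numRoots {K : Type*} [Field K] (f : Polynomial K) : ℕ :=
  letI := Classical.decEq K
  f.roots.toFinset.card

/-! ### Feistel-2n/n keyed iterated polynomial systems -/

/-- The nonlinear ("left branch") polynomials of the keyed iterated polynomial system for
Feistel-`2n/n` (with `n = m + 1`, indexed here by `k = 0, …, m`).  The ambient ring is
`K[x_{L,1}, x_{R,1}, …, x_{L,m}, x_{R,m}, y]` where `x_{L,j}` has variable index `2(j-1)`,
`x_{R,j}` has variable index `2(j-1) + 1` and `y` has variable index `2m`. -/
noncomputable def fstL {K : Type*} [Field K] (m : ℕ) (g : ℕ → MvPolynomial (Fin 2) K)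
    (pL pR cL : K) (k : ℕ) : MvPolynomial (Fin (2 * m + 1)) K :=
  (if k = 0 then C pR else X (((2 * (k - 1) + 1 : ℕ)) : Fin (2 * m + 1)))
  + aeval ![if k = 0 then C pL else X (((2 * (k - 1) : ℕ)) : Fin (2 * m + 1)),
            X (((2 * m : ℕ)) : Fin (2 * m + 1))] (g k)
  - (if k < m then X (((2 * k : ℕ)) : Fin (2 * m + 1)) else C cL)

/-- The linear ("right branch") polynomials of the keyed iterated polynomial system for
Feistel-`2n/n` (same variable conventions as in `fstL`). -/
noncomputable def fstR {K : Type*} [Field K] (m : ℕ) (pL cR : K) (k : ℕ) :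
    MvPolynomial (Fin (2 * m + 1)) K :=
  (if k = 0 then C pL else X (((2 * (k - 1) : ℕ)) : Fin (2 * m + 1)))
  - (if k < m then X (((2 * k + 1 : ℕ)) : Fin (2 * m + 1)) else C cR)

/-- The downsized Feistel system `H = {f̃_1, …, f̃_n}` (with `n = m + 1`, indexed here by
`k = 0, …, m`), obtained by substituting the linear polynomials into the nonlinear ones.  The
ambient ring is `K[x_{R,2}, …, x_{R,m}, x_{L,m}, y]` where `x_{R,j}` has variable index
`j - 2`, `x_{L,m}` has variable index `m - 1` and `y` has variable index `m`. -/
noncomputable def hTil {K : Type*} [Field K] (m : ℕ) (g : ℕ → MvPolynomial (Fin 2) K)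
    (pL pR cL : K) (k : ℕ) : MvPolynomial (Fin (m + 1)) K :=
  (if k = 0 then C pR else if k = 1 then C pL else X (((k - 2 : ℕ)) : Fin (m + 1)))
  + aeval ![if k = 0 then C pL else X (((k - 1 : ℕ)) : Fin (m + 1)),
            X ((m : ℕ) : Fin (m + 1))] (g k)
  - (if k < m then X ((k : ℕ) : Fin (m + 1)) else C cL)

/-- The chain `ĥ_1 = p_R + g_1(p_L, y)`, `ĥ_2 = p_L + g_2(ĥ_1, y)`,
`ĥ_i = ĥ_{i-2} + g_i(ĥ_{i-1}, y)` of univariate polynomials (0-based indexing: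
`hHat g pL pR k = ĥ_{k+1}`). -/
noncomputable def hHat {K : Type*} [Field K] (g : ℕ → MvPolynomial (Fin 2) K)
    (pL pR : K) : ℕ → Polynomial K
  | 0 => Polynomial.C pR + aeval ![Polynomial.C pL, Polynomial.X] (g 0)
  | 1 => Polynomial.C pL + aeval ![hHat g pL pR 0, Polynomial.X] (g 1)
  | (k + 2) => hHat g pL pR k + aeval ![hHat g pL pR (k + 1), Polynomial.X] (g (k + 2))

/-! ### Two plain/ciphertext systems -/

/-- A univariate keyed iterated polynomial system placed inside the ring
`K[u_1, …, u_m, v_1, …, v_m, y]` (`u_j` has index `j - 1`, `v_j` has index `m + j - 1`, `y` has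
index `2m`), with the state variables offset by `off` (so `off = 0` uses the `u`-variables and
`off = m` the `v`-variables). -/
noncomputable def twoF {K : Type*} [Field K] (m : ℕ) (g : ℕ → MvPolynomial (Fin 2) K)
    (p c : K) (off : ℕ) (k : ℕ) : MvPolynomial (Fin (2 * m + 1)) K :=
  aeval ![if k = 0 then C p else X (((off + (k - 1) : ℕ)) : Fin (2 * m + 1)),
          X (((2 * m : ℕ)) : Fin (2 * m + 1))] (g k)
  - (if k < m then X (((off + k : ℕ)) : Fin (2 * m + 1)) else C c)

/-! ### Macaulay spaces, degree falls, last fall degree, satiety, degree of regularity -/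

/-- The row space `W_{F,d}` of the degree-`d` inhomogeneous Macaulay matrix of the system `F`:
all polynomials of the form `∑ gᵢ·fᵢ` with `deg (gᵢ·fᵢ) ≤ d` for every `i`. -/
def Wsp {σ K ι : Type*} [CommSemiring K] [Fintype ι]
    (F : ι → MvPolynomial σ K) (d : ℕ) : Set (MvPolynomial σ K) :=
  {f | ∃ g : ι → MvPolynomial σ K, f = ∑ i, g i * F i ∧ ∀ i, (g i * F i).totalDegree ≤ d}

/-- `d_f`: the least degree `d` with `f ∈ W_{F,d}`. -/
noncomputable def dfall {σ K ι : Type*} [CommSemiring K] [Fintype ι]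
    (F : ι → MvPolynomial σ K) (f : MvPolynomial σ K) : ℕ :=
  sInf {d : ℕ | f ∈ Wsp F d}

/-- The last fall degree `d_F ∈ ℕ ∪ {∞}`: the least `d` such that every `f` in the ideal
generated by `F` lies in `W_{F, max (d, deg f)}` (the value `∞` imposes no condition since
`W_{F,∞} = (F)`). -/
noncomputable def lastFall {σ K ι : Type*} [CommSemiring K] [Fintype ι]
    (F : ι → MvPolynomial σ K) : ℕ∞ :=
  sInf {d : ℕ∞ | ∀ e : ℕ, d = (e : ℕ∞) →
    ∀ f ∈ Ideal.span (Set.range F), f ∈ Wsp F (max e f.totalDegree)}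

/-- The satiety of a homogeneous ideal: the least `s` such that `I` and `I^sat` agree in all
degrees `l ≥ s`. -/
noncomputable def satiety {σ K : Type*} [Field K] (I : Ideal (MvPolynomial σ K)) : ℕ :=
  sInf {s : ℕ | ∀ l, s ≤ l → ∀ f : MvPolynomial σ K, f.IsHomogeneous l →
    (f ∈ I ↔ f ∈ maxSat I)}

/-- The degree of regularity `d_reg(F) ∈ ℕ ∪ {∞}` of a polynomial system: the least `d` such
that every homogeneous polynomial of degree `d` lies in the ideal generated by the highest
degree components `F^top`. -/
noncomputable def dregSys {σ K : Type*} [CommSemiring K] (F : Set (MvPolynomial σ K)) : ℕ∞ :=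
  sInf {e : ℕ∞ | ∃ d : ℕ, e = (d : ℕ∞) ∧ ∀ f : MvPolynomial σ K, f.IsHomogeneous d →
    f ∈ Ideal.span (topComp '' F)}


/-! ### Auxiliary lemmas for Statement 8 -/

section Stmt8Aux

variable {K : Type*} [Field K] {σ τ : Type*}

lemma aux_aevalX_eq_sum (i : σ) (q : Polynomial K) :
    Polynomial.aeval (X i : MvPolynomial σ K) q
      = ∑ n ∈ q.support, monomial (Finsupp.single i n) (q.coeff n) := by
  rw [Polynomial.aeval_def, Polynomial.eval₂_eq_sum, Polynomial.sum_def]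
  refine Finset.sum_congr rfl fun n _ => ?_
  rw [MvPolynomial.algebraMap_eq, X_pow_eq_monomial, C_mul_monomial, mul_one]

lemma aux_coeff_aevalX (i : σ) (q : Polynomial K) (n : ℕ) :
    (Polynomial.aeval (X i : MvPolynomial σ K) q).coeff (Finsupp.single i n) = q.coeff n := by
  classical
  rw [aux_aevalX_eq_sum, MvPolynomial.coeff_sum]
  rw [Finset.sum_eq_single n]
  · rw [coeff_monomial, if_pos rfl]
  · intro b _ hb
    rw [coeff_monomial, if_neg]
    exact fun h => hb ((Finsupp.single_injective i) h)
  · intro hn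
    rw [coeff_monomial, if_pos rfl]
    exact (Polynomial.notMem_support_iff.mp hn)

lemma aux_totalDeg_aevalX_le (i : σ) (q : Polynomial K) :
    (Polynomial.aeval (X i : MvPolynomial σ K) q).totalDegree ≤ q.natDegree := by
  rw [aux_aevalX_eq_sum]
  refine (totalDegree_finset_sum _ _).trans (Finset.sup_le fun n hn => ?_)
  refine (totalDegree_monomial_le _ _).trans ?_
  rw [Finsupp.sum_single_index]
  · exact Polynomial.le_natDegree_of_mem_supp n hn
  · rfl

lemma aux_finsupp_fin2_sum (a : Fin 2 →₀ ℕ) : (a.sum fun _ e => e) = a 0 + a 1 := by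
  rw [Finsupp.sum_fintype]
  · exact Fin.sum_univ_two _
  · intro _; rfl

lemma aux_finsupp_fin2_eq_single {a : Fin 2 →₀ ℕ} {d : ℕ} (h0 : a 0 = d) (h1 : a 1 = 0) :
    a = Finsupp.single (0 : Fin 2) d := by
  ext j
  fin_cases j
  · simpa using h0
  · simpa using h1

/-- Key composition-degree lemma. -/
lemma aux_key (G : MvPolynomial (Fin 2) K) (d : ℕ) (hGd : G.totalDegree ≤ d)
    (hc : G.coeff (Finsupp.single 0 d) ≠ 0) (q : Polynomial K) (hq : 2 ≤ q.natDegree) :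
    (MvPolynomial.aeval ![q, Polynomial.X] G).natDegree = d * q.natDegree := by
  classical
  set D := q.natDegree with hD
  have hq0 : q ≠ 0 := by
    intro h
    rw [h, Polynomial.natDegree_zero] at hD
    omega
  have hexp : MvPolynomial.aeval ![q, Polynomial.X] G
      = ∑ a ∈ G.support, Polynomial.C (G.coeff a) * (q ^ a 0 * Polynomial.X ^ a 1) := by
    rw [MvPolynomial.aeval_def, eval₂_eq']
    refine Finset.sum_congr rfl fun a _ => ?_
    rw [Fin.prod_univ_two]
    simp [Polynomial.algebraMap_eq]
  have hterm : ∀ a : Fin 2 →₀ ℕ,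
      (Polynomial.C (G.coeff a) * (q ^ a 0 * Polynomial.X ^ a 1)).natDegree ≤ a 0 * D + a 1 := by
    intro a
    refine Polynomial.natDegree_mul_le.trans ?_
    simp only [Polynomial.natDegree_C, zero_add]
    refine Polynomial.natDegree_mul_le.trans ?_
    rw [Polynomial.natDegree_pow, Polynomial.natDegree_X_pow]
  have hsum : ∀ a ∈ G.support, a 0 + a 1 ≤ d := by
    intro a ha
    have := le_totalDegree (p := G) ha
    rw [aux_finsupp_fin2_sum] at this
    omega
  have hlt : ∀ a ∈ G.support, a ≠ Finsupp.single 0 d → a 0 * D + a 1 < d * D := by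
    intro a ha hne
    have hs := hsum a ha
    rcases Nat.lt_or_ge (a 0) d with h | h
    · obtain ⟨b, hb1, hb2, hb3⟩ : ∃ b, d = a 0 + b ∧ 1 ≤ b ∧ a 1 ≤ b :=
        ⟨d - a 0, by omega, by omega, by omega⟩
      have hbD : a 1 < b * D := by nlinarith
      calc a 0 * D + a 1 < a 0 * D + b * D := by omega
      _ = (a 0 + b) * D := by ring
      _ = d * D := by rw [← hb1]
    · have h0 : a 0 = d := by omega
      have h1 : a 1 = 0 := by omega
      exact absurd (aux_finsupp_fin2_eq_single h0 h1) hne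
  have hle : ∀ a ∈ G.support, a 0 * D + a 1 ≤ d * D := by
    intro a ha
    have hs := hsum a ha
    nlinarith
  have hupper : (MvPolynomial.aeval ![q, Polynomial.X] G).natDegree ≤ d * D := by
    rw [hexp]
    refine Polynomial.natDegree_sum_le_of_forall_le _ _ fun a ha => ?_
    exact (hterm a).trans (hle a ha)
  have hcoeff : (MvPolynomial.aeval ![q, Polynomial.X] G).coeff (d * D)
      = G.coeff (Finsupp.single 0 d) * q.leadingCoeff ^ d := by
    rw [hexp, Polynomial.finset_sum_coeff]
    rw [Finset.sum_eq_single (Finsupp.single (0 : Fin 2) d)]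
    · simp only [Finsupp.single_eq_same, Finsupp.single_eq_of_ne' (by decide : (0 : Fin 2) ≠ 1)]
      rw [pow_zero, mul_one, Polynomial.coeff_C_mul]
      rw [show d * D = (q ^ d).natDegree by rw [Polynomial.natDegree_pow]]
      rw [Polynomial.coeff_natDegree, Polynomial.leadingCoeff_pow]
    · intro a ha hne
      exact Polynomial.coeff_eq_zero_of_natDegree_lt ((hterm a).trans_lt (hlt a ha hne))
    · intro h
      exact absurd (MvPolynomial.notMem_support_iff.mp h) hc
  have hne0 : (MvPolynomial.aeval ![q, Polynomial.X] G).coeff (d * D) ≠ 0 := by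
    rw [hcoeff]
    exact mul_ne_zero hc (pow_ne_zero _ (Polynomial.leadingCoeff_ne_zero.mpr hq0))
  exact le_antisymm hupper (Polynomial.le_natDegree_of_ne_zero hne0)

lemma aux_totalDegree_rename_inj (f : σ → τ) (hf : Function.Injective f)
    (p : MvPolynomial σ K) : (rename f p).totalDegree = p.totalDegree := by
  classical
  refine le_antisymm (totalDegree_rename_le f p) ?_
  by_cases hp : p = 0
  · simp [hp]
  have hsupp : p.support.Nonempty := by
    rw [Finset.nonempty_iff_ne_empty]
    simpa [MvPolynomial.support_eq_empty] using hp
  obtain ⟨a, ha, hsum⟩ : ∃ a ∈ p.support, (a.sum fun _ e => e) = p.totalDegree := by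
    obtain ⟨a, ha, h⟩ := Finset.exists_mem_eq_sup p.support hsupp (fun s => s.sum fun _ e => e)
    exact ⟨a, ha, h.symm⟩
  have hmem : a.mapDomain f ∈ (rename f p).support := by
    rw [support_rename_of_injective hf]
    exact Finset.mem_image_of_mem _ ha
  have hle := le_totalDegree hmem
  rwa [Finsupp.sum_mapDomain_index (fun _ => rfl) (fun _ _ _ => rfl), hsum] at hle

end Stmt8Aux

/-- (`n = m + 1 ≥ 2`.) Under the degree and monomial hypotheses, the
univariate polynomials `ĝ_i` of the lexicographic Gröbner basis satisfy
`deg ĝ_i = ∏_{k=1}^i d_k`. -/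
theorem stmt_8 {K : Type*} [Field K] (m : ℕ) (hm : 1 ≤ m)
    (g : ℕ → MvPolynomial (Fin 2) K) (p c : K)
    (hgnc : ∀ k ≤ m, 0 < (g k).totalDegree)
    (hzero : ∃ z : Fin (m + 1) → K, ∀ k ≤ m, eval z (keyedF m g p c k) = 0)
    (hdeg : ∀ k ≤ m, 2 ≤ (keyedF m g p c k).totalDegree)
    (hmon : ∀ k, 1 ≤ k → k ≤ m →
      (keyedF m g p c k).coeff (Finsupp.single (((k - 1 : ℕ)) : Fin (m + 1))
        ((keyedF m g p c k).totalDegree)) ≠ 0) :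
    ∀ k ≤ m, (if k < m then ghat g p k else ghat g p m - Polynomial.C c).natDegree
      = ∏ j ∈ Finset.range (k + 1), (keyedF m g p c j).totalDegree := by
  classical
  have hm1 : (m : ℕ) < m + 1 := Nat.lt_succ_self m
  set b : Fin (m + 1) := ((m : ℕ) : Fin (m + 1)) with hb
  have hvb : b.val = m := Fin.val_cast_of_lt hm1
  -- base case: degree of `keyedF 0` equals `natDegree (ghat g p 0)`
  have hswap : Polynomial.aeval (X b : MvPolynomial (Fin (m + 1)) K) (ghat g p 0)
      = MvPolynomial.aeval ![C p, X b] (g 0) := by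
    have h0 : ghat g p 0 = MvPolynomial.aeval ![Polynomial.C p, Polynomial.X] (g 0) := rfl
    have hfun2 : (fun i => Polynomial.aeval (X b : MvPolynomial (Fin (m + 1)) K)
        (![Polynomial.C p, Polynomial.X] i)) = ![C p, X b] := by
      funext i
      fin_cases i <;> simp [MvPolynomial.algebraMap_eq]
    rw [h0, MvPolynomial.comp_aeval_apply, hfun2]
  have hkey0 : keyedF m g p c 0
      = Polynomial.aeval (X b : MvPolynomial (Fin (m + 1)) K) (ghat g p 0)
        - X (((0 : ℕ)) : Fin (m + 1)) := by
    rw [keyedF, if_pos rfl, if_pos (by omega : 0 < m), hswap]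
  set D0 := (ghat g p 0).natDegree with hD0
  have hup0 : (keyedF m g p c 0).totalDegree ≤ max D0 1 := by
    rw [hkey0, sub_eq_add_neg]
    refine (totalDegree_add _ _).trans ?_
    refine max_le_max (aux_totalDeg_aevalX_le _ _) ?_
    rw [totalDegree_neg, totalDegree_X]
  have h2D0 : 2 ≤ D0 := by
    have := hdeg 0 (by omega)
    omega
  have hg0ne : ghat g p 0 ≠ 0 := by
    intro h
    rw [h, Polynomial.natDegree_zero] at hD0
    omega
  have hb0 : ((0 : ℕ) : Fin (m + 1)) ≠ b := by
    intro h
    have := congrArg Fin.val h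
    rw [Fin.val_cast_of_lt (by omega), hvb] at this
    omega
  have hco0 : (keyedF m g p c 0).coeff (Finsupp.single b D0) ≠ 0 := by
    rw [hkey0, MvPolynomial.coeff_sub, aux_coeff_aevalX, Polynomial.coeff_natDegree]
    have hX : (X (((0 : ℕ)) : Fin (m + 1)) : MvPolynomial (Fin (m + 1)) K).coeff
        (Finsupp.single b D0) = 0 := by
      rw [coeff_X', if_neg]
      intro h
      have h2 := DFunLike.congr_fun h b
      rw [Finsupp.single_eq_of_ne' hb0, Finsupp.single_eq_same] at h2
      omega
    rw [hX, sub_zero]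
    exact Polynomial.leadingCoeff_ne_zero.mpr hg0ne
  have hlow0 : D0 ≤ (keyedF m g p c 0).totalDegree := by
    have hmem := MvPolynomial.mem_support_iff.mpr hco0
    have hle := le_totalDegree hmem
    rwa [Finsupp.sum_single_index rfl] at hle
  have hbase : (keyedF m g p c 0).totalDegree = D0 := by omega
  -- the key fact for `1 ≤ k ≤ m`
  have fact : ∀ k, 1 ≤ k → k ≤ m →
      (g k).totalDegree = (keyedF m g p c k).totalDegree ∧
      (g k).coeff (Finsupp.single 0 ((keyedF m g p c k).totalDegree)) ≠ 0 := by
    intro k hk1 hkm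
    have h2 : 2 ≤ (keyedF m g p c k).totalDegree := hdeg k hkm
    set a : Fin (m + 1) := (((k - 1 : ℕ)) : Fin (m + 1)) with ha
    have hva : a.val = k - 1 := Fin.val_cast_of_lt (by omega)
    have hab : a ≠ b := by
      intro h
      have := congrArg Fin.val h
      rw [hva, hvb] at this
      omega
    have hren : MvPolynomial.aeval ![(X a : MvPolynomial (Fin (m + 1)) K), X b] (g k)
        = rename ![a, b] (g k) := by
      have hfun : (![(X a : MvPolynomial (Fin (m + 1)) K), X b])
          = X ∘ (![a, b] : Fin 2 → Fin (m + 1)) := by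
        funext i
        fin_cases i <;> simp
      rw [hfun, rename_eq_aeval]
    have hkeyk : keyedF m g p c k = rename ![a, b] (g k)
        - (if k < m then X ((k : ℕ) : Fin (m + 1)) else C c) := by
      rw [keyedF, if_neg (by omega : ¬ k = 0), hren]
    have hinj : Function.Injective (![a, b] : Fin 2 → Fin (m + 1)) := by
      intro i j hij
      fin_cases i <;> fin_cases j <;> simp_all
    have hrdeg : (rename (![a, b] : Fin 2 → Fin (m + 1)) (g k)).totalDegree
        = (g k).totalDegree := aux_totalDegree_rename_inj _ hinj _
    -- upper bound forces `(g k).totalDegree ≥ 2`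
    have hup : (keyedF m g p c k).totalDegree ≤ max (g k).totalDegree 1 := by
      rw [hkeyk, sub_eq_add_neg]
      refine (totalDegree_add _ _).trans ?_
      refine max_le_max (le_of_eq hrdeg) ?_
      rw [totalDegree_neg]
      split
      · rw [totalDegree_X]
      · rw [totalDegree_C]
        omega
    have hgk2 : 2 ≤ (g k).totalDegree := by omega
    have hBdeg : (-(if k < m then (X ((k : ℕ) : Fin (m + 1)) : MvPolynomial (Fin (m + 1)) K)
        else C c)).totalDegree < (rename (![a, b] : Fin 2 → Fin (m + 1)) (g k)).totalDegree := by
      rw [totalDegree_neg, hrdeg]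
      split
      · rw [totalDegree_X]
        omega
      · rw [totalDegree_C]
        omega
    have heq : (keyedF m g p c k).totalDegree = (g k).totalDegree := by
      rw [hkeyk, sub_eq_add_neg, totalDegree_add_eq_left_of_totalDegree_lt hBdeg, hrdeg]
    refine ⟨heq.symm, ?_⟩
    -- the coefficient fact
    set dk := (keyedF m g p c k).totalDegree with hdk
    have hBco : (if k < m then (X ((k : ℕ) : Fin (m + 1)) : MvPolynomial (Fin (m + 1)) K)
        else C c).coeff (Finsupp.single a dk) = 0 := by
      split
      · rw [coeff_X', if_neg]
        intro h
        have hk' : ((k : ℕ) : Fin (m + 1)) ≠ a := by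
          intro hh
          have := congrArg Fin.val hh
          rw [Fin.val_cast_of_lt (by omega), hva] at this
          omega
        have h2' := DFunLike.congr_fun h a
        rw [Finsupp.single_eq_of_ne' hk', Finsupp.single_eq_same] at h2'
        omega
      · rw [coeff_C, if_neg]
        intro h
        have h2' := DFunLike.congr_fun h a
        rw [Finsupp.single_eq_same] at h2'
        simp only [Finsupp.coe_zero, Pi.zero_apply] at h2'
        omega
    have h1 := hmon k hk1 hkm
    rw [← hdk, ← ha] at h1
    rw [hkeyk, MvPolynomial.coeff_sub, hBco, sub_zero] at h1
    have hmap : Finsupp.single a dk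
        = Finsupp.mapDomain (![a, b] : Fin 2 → Fin (m + 1)) (Finsupp.single 0 dk) := by
      rw [Finsupp.mapDomain_single]
      congr 1
    rwa [hmap, coeff_rename_mapDomain _ hinj] at h1
  -- main induction
  have main : ∀ k, k ≤ m → (ghat g p k).natDegree
      = ∏ j ∈ Finset.range (k + 1), (keyedF m g p c j).totalDegree
      ∧ 2 ≤ (ghat g p k).natDegree := by
    intro k
    induction k with
    | zero =>
      intro _
      rw [Finset.prod_range_one, hbase]
      exact ⟨rfl, h2D0⟩
    | succ k ih =>
      intro hk1
      obtain ⟨hdegk, h2k⟩ := ih (by omega)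
      obtain ⟨he, hcg⟩ := fact (k + 1) (by omega) hk1
      have hgh : ghat g p (k + 1)
          = MvPolynomial.aeval ![ghat g p k, Polynomial.X] (g (k + 1)) := rfl
      have hkey := aux_key (g (k + 1)) ((keyedF m g p c (k + 1)).totalDegree)
        (le_of_eq he) hcg (ghat g p k) h2k
      rw [hgh, hkey]
      have hdkk : 2 ≤ (keyedF m g p c (k + 1)).totalDegree := hdeg (k + 1) hk1
      constructor
      · rw [Finset.prod_range_succ, ← hdegk, mul_comm]
      · nlinarith
  -- conclusion
  intro k hk
  by_cases hlt : k < m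
  · rw [if_pos hlt]
    exact (main k hk).1
  · have hkm : k = m := by omega
    rw [hkm, if_neg (lt_irrefl m), Polynomial.natDegree_sub_C]
    exact (main m le_rfl).1
end

section
/- Let K be a field, let n ≥ 2, and let I = (f_1,…,f_n) ⊆ P = K[x_1,…,x_{n−1},y] be generated by a univariate keyed iterated polynomial system with d_i := deg f_i ≥ 2 for all i and with the monomial x_{i−1}^{d_i} occurring in f_i for 2 ≤ i ≤ n. Let ĝ_1 = g_1(p,y) and ĝ_i = g_i(ĝ_{i−1}(y), y) for 2 ≤ i ≤ n−1, and for a monomial t = y^{a_0}·x_1^{a_1}⋯x_{n−1}^{a_{n−1}} with a_0 < d_1 and a_j < d_{j+1} for all 1 ≤ j ≤ n−1, set t̂ = y^{a_0}·ĝ_1(y)^{a_1}⋯ĝ_{n−1}(y)^{a_{n−1}} ∈ K[y]. Then: (a) for s_i = ∏_{j=i}^{n−1} x_j^{d_{j+1}−1} with 1 ≤ i ≤ n−1, one has deg ŝ_i = ∏_{k=1}^{n} d_k − ∏_{k=1}^{i} d_k; (b) for every monomial t as above with deg t ≤ deg s_i, one has deg t̂ ≤ deg ŝ_i, and this inequality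 is strict whenever t ≠ s_i. -/
open MvPolynomial
open Fin.NatCast

/-- The substitution `t ↦ t̂` of a monomial (exponent vector) of `K[x_1, …, x_m, y]` into a
univariate polynomial in `y`: `y ↦ y` and `x_j ↦ ĝ_j`. -/
noncomputable def substY {K : Type*} [Field K] (m : ℕ) (g : ℕ → MvPolynomial (Fin 2) K)
    (p : K) (a : Fin (m + 1) →₀ ℕ) : Polynomial K :=
  Polynomial.X ^ (a ((m : ℕ) : Fin (m + 1)))
    * ∏ j ∈ Finset.range m, (ghat g p j) ^ (a ((j : ℕ) : Fin (m + 1)))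

/-- The exponent vector of the monomial `s_{i+1} = ∏_{j=i+1}^{m} x_j^{d_{j+1} - 1}`
(0-based index `i`, so `sMono m g p c i` corresponds to the paper's `s_{i+1}`). -/
noncomputable def sMono {K : Type*} [Field K] (m : ℕ) (g : ℕ → MvPolynomial (Fin 2) K)
    (p c : K) (i : ℕ) : Fin (m + 1) →₀ ℕ :=
  ∑ v ∈ Finset.Ico i m, Finsupp.single ((v : ℕ) : Fin (m + 1))
    ((keyedF m g p c (v + 1)).totalDegree - 1)

/-! ### Auxiliary lemmas for Statement 10 -/

/-- Embedding a univariate polynomial via a single variable: total degree and coefficients. -/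
lemma aux_yPoly {K : Type*} [Field K] {σ : Type*} (v : σ) (q : Polynomial K) :
    (Polynomial.aeval (X v : MvPolynomial σ K) q).totalDegree = q.natDegree ∧
    ∀ n : ℕ, MvPolynomial.coeff (Finsupp.single v n)
      (Polynomial.aeval (X v : MvPolynomial σ K) q) = q.coeff n := by
  classical
  have hrep : Polynomial.aeval (X v : MvPolynomial σ K) q
      = ∑ n ∈ q.support, monomial (Finsupp.single v n) (q.coeff n) := by
    conv_lhs => rw [q.as_sum_support]
    rw [map_sum]
    refine Finset.sum_congr rfl fun n _ => ?_
    rw [Polynomial.aeval_monomial, MvPolynomial.algebraMap_eq, X_pow_eq_monomial,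
      C_mul_monomial, mul_one]
  have hco : ∀ n : ℕ, MvPolynomial.coeff (Finsupp.single v n)
      (Polynomial.aeval (X v : MvPolynomial σ K) q) = q.coeff n := by
    intro n
    rw [hrep, MvPolynomial.coeff_sum]
    have hiff : ∀ k : ℕ, (Finsupp.single v k = Finsupp.single v n) ↔ k = n := by
      intro k
      constructor
      · intro h
        rcases (Finsupp.single_eq_single_iff _ _ _ _).mp h with ⟨_, h2⟩ | ⟨h1, h2⟩ <;> omega
      · rintro rfl; rfl
    simp only [MvPolynomial.coeff_monomial, hiff]
    rw [Finset.sum_ite_eq' q.support n (fun k => q.coeff k)]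
    split_ifs with h
    · rfl
    · exact (Polynomial.notMem_support_iff.mp h).symm
  refine ⟨le_antisymm ?_ ?_, hco⟩
  · rw [hrep]
    refine le_trans (totalDegree_finset_sum _ _) ?_
    apply Finset.sup_le
    intro n hn
    refine le_trans (totalDegree_monomial_le _ _) ?_
    rw [Finsupp.sum_single_index (by rfl)]
    exact Polynomial.le_natDegree_of_mem_supp n hn
  · by_cases hq0 : q = 0
    · simp [hq0]
    · have h1 : MvPolynomial.coeff (Finsupp.single v q.natDegree)
          (Polynomial.aeval (X v : MvPolynomial σ K) q) ≠ 0 := by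
        rw [hco]
        exact Polynomial.leadingCoeff_ne_zero.mpr hq0
      have h2 := MvPolynomial.le_totalDegree (MvPolynomial.mem_support_iff.mpr h1)
      rwa [Finsupp.sum_single_index (by rfl)] at h2

/-- Total degree is preserved by injective renaming. -/
lemma aux_rename_td {σ τ K : Type*} [Field K] {f : σ → τ} (hf : Function.Injective f)
    (p : MvPolynomial σ K) : (rename f p).totalDegree = p.totalDegree := by
  refine le_antisymm (totalDegree_rename_le f p) ?_
  rw [MvPolynomial.totalDegree]
  apply Finset.sup_le
  intro a ha
  have h1 : MvPolynomial.coeff (Finsupp.mapDomain f a) (rename f p) ≠ 0 := by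
    rw [coeff_rename_mapDomain f hf]
    exact MvPolynomial.mem_support_iff.mp ha
  have h2 := MvPolynomial.le_totalDegree (MvPolynomial.mem_support_iff.mpr h1)
  refine le_of_eq_of_le ?_ h2
  rw [Finsupp.sum_mapDomain_index (fun _ => rfl) (fun _ _ _ => rfl)]

/-- Sandwich lemma: subtracting something of degree `≤ 1` from a polynomial of degree `≥ 2`
does not change the total degree. -/
lemma aux_sub_td {σ K : Type*} [Field K] (A B : MvPolynomial σ K)
    (hB : B.totalDegree ≤ 1) (h2 : 2 ≤ (A - B).totalDegree) :
    (A - B).totalDegree = A.totalDegree := by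
  have hup : (A - B).totalDegree ≤ max A.totalDegree 1 := by
    rw [sub_eq_add_neg]
    refine le_trans (totalDegree_add _ _) ?_
    rw [totalDegree_neg]
    exact max_le_max le_rfl hB
  have hA2 : 2 ≤ A.totalDegree := by
    have := le_trans h2 hup
    rcases max_cases A.totalDegree 1 with ⟨h, _⟩ | ⟨h, _⟩ <;> omega
  have hdown : A.totalDegree ≤ (A - B).totalDegree := by
    have hA : A = (A - B) + B := by ring
    calc A.totalDegree = ((A - B) + B).totalDegree := by rw [← hA]
      _ ≤ max (A - B).totalDegree B.totalDegree := totalDegree_add _ _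
      _ ≤ (A - B).totalDegree := max_le le_rfl (by omega)
  exact le_antisymm (hup.trans (max_le le_rfl (by omega))) hdown

/-- Degree of the substitution of a univariate polynomial into a bivariate polynomial. -/
lemma aux_comp_deg {K : Type*} [Field K] (G : MvPolynomial (Fin 2) K) (q : Polynomial K)
    (hc : G.coeff (Finsupp.single 0 G.totalDegree) ≠ 0)
    (hq : 2 ≤ q.natDegree) :
    (MvPolynomial.aeval ![q, Polynomial.X] G).natDegree = G.totalDegree * q.natDegree := by
  classical
  set d := G.totalDegree with hd
  set D := q.natDegree with hD
  have hq0 : q ≠ 0 := fun h => by simp [h] at hD; omega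
  have hrep : MvPolynomial.aeval ![q, Polynomial.X] G
      = ∑ a ∈ G.support, Polynomial.C (G.coeff a) * (q ^ a 0 * Polynomial.X ^ a 1) := by
    rw [MvPolynomial.aeval_def, MvPolynomial.eval₂_eq']
    refine Finset.sum_congr rfl fun a _ => ?_
    rw [Fin.prod_univ_two]
    simp [Polynomial.algebraMap_eq]
  have hsum : ∀ a ∈ G.support, a 0 + a 1 ≤ d := by
    intro a ha
    have := MvPolynomial.le_totalDegree ha
    rwa [Finsupp.sum_fintype _ _ (fun _ => rfl), Fin.sum_univ_two] at this
  have hterm : ∀ a : Fin 2 →₀ ℕ, G.coeff a ≠ 0 →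
      (Polynomial.C (G.coeff a) * (q ^ a 0 * Polynomial.X ^ a 1)).natDegree
        = a 0 * D + a 1 := by
    intro a hca
    rw [Polynomial.natDegree_mul (by simpa using hca)
        (mul_ne_zero (pow_ne_zero _ hq0) (pow_ne_zero _ Polynomial.X_ne_zero)),
      Polynomial.natDegree_C,
      Polynomial.natDegree_mul (pow_ne_zero _ hq0) (pow_ne_zero _ Polynomial.X_ne_zero),
      Polynomial.natDegree_pow, Polynomial.natDegree_X_pow]
    rw [hD]
    omega
  have hstrict : ∀ a ∈ G.support, a ≠ Finsupp.single 0 d → a 0 * D + a 1 < d * D := by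
    intro a ha hne
    have hs := hsum a ha
    have h0 : a 0 < d := by
      by_contra h
      push_neg at h
      have h1 : a 0 = d := le_antisymm (le_trans (Nat.le_add_right _ _) hs) h
      have h2 : a 1 = 0 := by omega
      apply hne
      ext x
      fin_cases x <;> simp [h1, h2, Finsupp.single_apply]
    obtain ⟨e, he⟩ : ∃ e, d = a 0 + 1 + e := ⟨d - a 0 - 1, by omega⟩
    have h1 : a 1 + 1 ≤ D * (1 + e) := by
      have h2 : 2 * (1 + e) ≤ D * (1 + e) := Nat.mul_le_mul_right _ hq
      omega
    have h2 : d * D = a 0 * D + D * (1 + e) := by rw [he]; ring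
    omega
  have hub : (MvPolynomial.aeval ![q, Polynomial.X] G).natDegree ≤ d * D := by
    rw [hrep]
    apply Polynomial.natDegree_sum_le_of_forall_le
    intro a ha
    rw [hterm a (MvPolynomial.mem_support_iff.mp ha)]
    have h1 := hsum a ha
    calc a 0 * D + a 1 ≤ a 0 * D + a 1 * D := by
          have : a 1 ≤ a 1 * D := Nat.le_mul_of_pos_right _ (by omega)
          omega
      _ = (a 0 + a 1) * D := by ring
      _ ≤ d * D := Nat.mul_le_mul_right _ h1
  have hcoeff : (MvPolynomial.aeval ![q, Polynomial.X] G).coeff (d * D) ≠ 0 := by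
    rw [hrep, Polynomial.finset_sum_coeff,
      Finset.sum_eq_single_of_mem (Finsupp.single 0 d) (MvPolynomial.mem_support_iff.mpr hc)
        (fun a ha hne => by
          apply Polynomial.coeff_eq_zero_of_natDegree_lt
          rw [hterm a (MvPolynomial.mem_support_iff.mp ha)]
          exact hstrict a ha hne)]
    have hs0 : (Finsupp.single (0 : Fin 2) d) 0 = d := Finsupp.single_eq_same
    have hs1 : (Finsupp.single (0 : Fin 2) d) 1 = 0 := by
      rw [Finsupp.single_apply, if_neg (by decide)]
    rw [hs0, hs1, pow_zero, mul_one, Polynomial.coeff_C_mul]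
    have h3 : (q ^ d).coeff (d * D) = q.leadingCoeff ^ d := by
      rw [show d * D = (q ^ d).natDegree from (Polynomial.natDegree_pow q d).symm,
        Polynomial.coeff_natDegree, Polynomial.leadingCoeff_pow]
    rw [h3]
    exact mul_ne_zero hc (pow_ne_zero _ (Polynomial.leadingCoeff_ne_zero.mpr hq0))
  exact le_antisymm hub (Polynomial.le_natDegree_of_ne_zero hcoeff)

/-- Telescoping identity for products of degrees. -/
lemma aux_tel (m : ℕ) (d D : ℕ → ℕ) (hd : ∀ k, k ≤ m → 1 ≤ d k)
    (hDs : ∀ j, D (j + 1) = D j * d (j + 1)) :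
    ∀ n, n ≤ m → ∀ i, i ≤ n →
      ∑ l ∈ Finset.Ico i n, (d (l + 1) - 1) * D l + D i = D n := by
  intro n
  induction n with
  | zero =>
    intro _ i hi
    interval_cases i
    simp
  | succ n ih =>
    intro hn i hi
    rcases Nat.eq_or_lt_of_le hi with h | h
    · rw [h]; simp
    · have hi'n : i ≤ n := by omega
      rw [Finset.sum_Ico_succ_top hi'n]
      have h1 := ih (by omega) i hi'n
      have h2 : (d (n + 1) - 1) * D n + D n = d (n + 1) * D n := by
        have h3 : d (n + 1) - 1 + 1 = d (n + 1) := by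
          have := hd (n + 1) hn; omega
        calc (d (n + 1) - 1) * D n + D n = (d (n + 1) - 1 + 1) * D n := by ring
          _ = d (n + 1) * D n := by rw [h3]
      rw [hDs, mul_comm (D n)]
      linarith [h1, h2]

/-- The combinatorial core of Statement 10(b). -/
lemma aux_core (m i : ℕ) (d D b s : ℕ → ℕ)
    (hd : ∀ k, k ≤ m → 2 ≤ d k)
    (hD0 : D 0 = d 0) (hDs : ∀ j, D (j + 1) = D j * d (j + 1))
    (him : i < m)
    (hs : ∀ j, j < m → s j = if i ≤ j then d (j + 1) - 1 else 0) (hsm : s m = 0)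
    (hb : ∀ j, j < m → b j < d (j + 1)) (hbm : b m < d 0)
    (hSb : ∑ j ∈ Finset.range (m + 1), b j ≤ ∑ j ∈ Finset.range (m + 1), s j)
    (hne : ∃ j, j ≤ m ∧ b j ≠ s j) :
    b m + ∑ j ∈ Finset.range m, b j * D j + 1
      ≤ s m + ∑ j ∈ Finset.range m, s j * D j := by
  classical
  have htel := aux_tel m d D (fun k hk => by have := hd k hk; omega) hDs
  obtain ⟨j0, hj0m, hj0ne⟩ := hne
  by_cases hall : ∀ j, j < m → b j = s j
  · exfalso
    have hbm' : b m ≠ s m := by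
      rcases Nat.lt_or_ge j0 m with h | h
      · exact absurd (hall j0 h) hj0ne
      · have hj0 : j0 = m := by omega
        rwa [hj0] at hj0ne
    have e1 : ∑ j ∈ Finset.range (m + 1), b j = ∑ j ∈ Finset.range m, s j + b m := by
      rw [Finset.sum_range_succ]
      congr 1
      exact Finset.sum_congr rfl fun j hj => hall j (Finset.mem_range.mp hj)
    have e2 : ∑ j ∈ Finset.range (m + 1), s j = ∑ j ∈ Finset.range m, s j + s m :=
      Finset.sum_range_succ _ _
    have hbm0 : b m = 0 := by
      rw [e1] at hSb; rw [e2, hsm] at hSb; omega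
    exact hbm' (by rw [hbm0, hsm])
  · push_neg at hall
    obtain ⟨j1, hj1, hj1ne⟩ := hall
    set T := (Finset.range m).filter (fun j => b j ≠ s j) with hT
    have hTne : T.Nonempty :=
      ⟨j1, Finset.mem_filter.mpr ⟨Finset.mem_range.mpr hj1, hj1ne⟩⟩
    obtain ⟨j, hjT, hjmax⟩ : ∃ j ∈ T, ∀ l ∈ T, l ≤ j :=
      ⟨T.max' hTne, T.max'_mem hTne, fun l hl => Finset.le_max' T l hl⟩
    have hjm : j < m := Finset.mem_range.mp (Finset.mem_filter.mp hjT).1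
    have hjne : b j ≠ s j := (Finset.mem_filter.mp hjT).2
    have hagree : ∀ l, j < l → l < m → b l = s l := by
      intro l h1 h2
      by_contra h
      have := hjmax l (Finset.mem_filter.mpr ⟨Finset.mem_range.mpr h2, h⟩)
      omega
    rcases Nat.lt_or_ge (b j) (s j) with hlt | hge
    · -- main chain
      have hij : i ≤ j := by
        by_contra h
        rw [hs j hjm, if_neg h] at hlt
        omega
      have hsum1 : ∑ l ∈ Finset.range j, b l * D l
          ≤ ∑ l ∈ Finset.range j, (d (l + 1) - 1) * D l := by
        apply Finset.sum_le_sum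
        intro l hl
        have hlm : l < m := by have := Finset.mem_range.mp hl; omega
        exact Nat.mul_le_mul_right _ (by have := hb l hlm; omega)
      have htelj : ∑ l ∈ Finset.range j, (d (l + 1) - 1) * D l + D 0 = D j := by
        rw [Finset.range_eq_Ico]
        exact htel j (by omega) 0 (by omega)
      have hkey : b m + ∑ l ∈ Finset.range j, b l * D l + 1 ≤ D j := by
        have h3 : b m + 1 ≤ D 0 := by rw [hD0]; omega
        linarith [hsum1, htelj, h3]
      have hsplitb : ∑ l ∈ Finset.range m, b l * D l
          = ∑ l ∈ Finset.range j, b l * D l + b j * D j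
            + ∑ l ∈ Finset.Ico (j + 1) m, b l * D l := by
        rw [← Finset.sum_range_add_sum_Ico _ (show j + 1 ≤ m by omega),
          Finset.sum_range_succ]
      have hsplits : ∑ l ∈ Finset.range m, s l * D l
          = ∑ l ∈ Finset.range j, s l * D l + s j * D j
            + ∑ l ∈ Finset.Ico (j + 1) m, s l * D l := by
        rw [← Finset.sum_range_add_sum_Ico _ (show j + 1 ≤ m by omega),
          Finset.sum_range_succ]
      have hsame : ∑ l ∈ Finset.Ico (j + 1) m, b l * D l
          = ∑ l ∈ Finset.Ico (j + 1) m, s l * D l := by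
        refine Finset.sum_congr rfl fun l hl => ?_
        have := Finset.mem_Ico.mp hl
        rw [hagree l (by omega) (by omega)]
      have hmul : (b j + 1) * D j ≤ s j * D j := Nat.mul_le_mul_right _ (by omega)
      have hexpand : (b j + 1) * D j = b j * D j + D j := by ring
      generalize hA : ∑ l ∈ Finset.range m, b l * D l = A at *
      generalize hB : ∑ l ∈ Finset.range m, s l * D l = B at *
      generalize hC : ∑ l ∈ Finset.range j, b l * D l = C at *
      generalize hE : ∑ l ∈ Finset.Ico (j + 1) m, b l * D l = E at *
      generalize hF : b j * D j = F at *
      generalize hG : s j * D j = G at *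
      generalize hH : (b j + 1) * D j = H at *
      omega
    · exfalso
      have hgt : s j < b j := by omega
      have hij : ¬ i ≤ j := by
        intro h
        have := hb j hjm
        rw [hs j hjm, if_pos h] at hgt
        omega
      have hs0 : ∀ l, l ≤ j → s l = 0 := by
        intro l hl
        rw [hs l (by omega), if_neg (by omega)]
      have e1 : ∑ l ∈ Finset.range (m + 1), s l = ∑ l ∈ Finset.Ico (j + 1) m, s l := by
        rw [Finset.sum_range_succ, hsm, add_zero,
          ← Finset.sum_range_add_sum_Ico _ (show j + 1 ≤ m by omega),
          Finset.sum_eq_zero (fun l hl => hs0 l (by have := Finset.mem_range.mp hl; omega)),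
          zero_add]
      have e2 : b j + ∑ l ∈ Finset.Ico (j + 1) m, s l ≤ ∑ l ∈ Finset.range (m + 1), b l := by
        rw [Finset.sum_range_succ,
          ← Finset.sum_range_add_sum_Ico _ (show j + 1 ≤ m by omega),
          Finset.sum_range_succ]
        have h4 : ∑ l ∈ Finset.Ico (j + 1) m, b l = ∑ l ∈ Finset.Ico (j + 1) m, s l := by
          refine Finset.sum_congr rfl fun l hl => ?_
          have := Finset.mem_Ico.mp hl
          exact hagree l (by omega) (by omega)
        rw [h4]
        omega
      rw [e1] at hSb
      omega

/-- `ĝ_1` has the same degree as `f_1`. -/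
lemma aux_g0 {K : Type*} [Field K] (m : ℕ) (hm : 1 ≤ m) (g : ℕ → MvPolynomial (Fin 2) K)
    (p c : K) (hdeg : 2 ≤ (keyedF m g p c 0).totalDegree) :
    (ghat g p 0).natDegree = (keyedF m g p c 0).totalDegree := by
  classical
  have hkey : keyedF m g p c 0
      = Polynomial.aeval (X ((m : ℕ) : Fin (m + 1)) : MvPolynomial (Fin (m + 1)) K)
          (ghat g p 0)
        - X (((0 : ℕ)) : Fin (m + 1)) := by
    rw [keyedF, if_pos rfl, if_pos (by omega : 0 < m)]
    congr 1
    rw [show ghat g p 0 = MvPolynomial.aeval ![Polynomial.C p, Polynomial.X] (g 0) from rfl]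
    have hcomp : (MvPolynomial.aeval
          ![(C p : MvPolynomial (Fin (m + 1)) K), X ((m : ℕ) : Fin (m + 1))])
        = (Polynomial.aeval (X ((m : ℕ) : Fin (m + 1)) : MvPolynomial (Fin (m + 1)) K)).comp
          (MvPolynomial.aeval ![Polynomial.C p, Polynomial.X]) := by
      apply MvPolynomial.algHom_ext
      intro i
      fin_cases i <;> simp [MvPolynomial.algebraMap_eq]
    exact DFunLike.congr_fun hcomp (g 0)
  obtain ⟨htd, -⟩ := aux_yPoly (K := K) ((m : ℕ) : Fin (m + 1)) (ghat g p 0)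
  have hXd : (X (((0 : ℕ)) : Fin (m + 1)) : MvPolynomial (Fin (m + 1)) K).totalDegree ≤ 1 :=
    le_of_eq (totalDegree_X _)
  have hsub := aux_sub_td _ _ hXd (by rw [← hkey]; exact hdeg)
  rw [hkey, hsub, htd]

/-- For `1 ≤ k ≤ m`, `g_k` has the same degree as `f_k` and contains `x^{d_k}`. -/
lemma aux_gk {K : Type*} [Field K] (m : ℕ) (g : ℕ → MvPolynomial (Fin 2) K) (p c : K)
    (k : ℕ) (hk1 : 1 ≤ k) (hkm : k ≤ m)
    (hdeg : 2 ≤ (keyedF m g p c k).totalDegree)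
    (hmon : (keyedF m g p c k).coeff (Finsupp.single (((k - 1 : ℕ)) : Fin (m + 1))
        ((keyedF m g p c k).totalDegree)) ≠ 0) :
    (g k).totalDegree = (keyedF m g p c k).totalDegree ∧
      (g k).coeff (Finsupp.single 0 ((keyedF m g p c k).totalDegree)) ≠ 0 := by
  classical
  set w : Fin (m + 1) := (((k - 1 : ℕ)) : Fin (m + 1)) with hw
  set mm : Fin (m + 1) := ((m : ℕ) : Fin (m + 1)) with hmm
  have hwv : (w : ℕ) = k - 1 := Fin.val_cast_of_lt (by omega)
  have hmv : (mm : ℕ) = m := Fin.val_cast_of_lt (by omega)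
  have hwm : w ≠ mm := by
    intro h
    apply_fun Fin.val at h
    rw [hwv, hmv] at h
    omega
  have he : Function.Injective (![w, mm] : Fin 2 → Fin (m + 1)) := by
    intro a b hab
    fin_cases a <;> fin_cases b <;> simp_all
  have hkey : keyedF m g p c k
      = rename (![w, mm] : Fin 2 → Fin (m + 1)) (g k)
        - (if k < m then X ((k : ℕ) : Fin (m + 1)) else C c) := by
    rw [keyedF, if_neg (by omega : ¬ k = 0)]
    congr 1
    have h2 : (MvPolynomial.aeval
          ![(X w : MvPolynomial (Fin (m + 1)) K), X mm])
        = (rename (![w, mm] : Fin 2 → Fin (m + 1)) :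
            MvPolynomial (Fin 2) K →ₐ[K] MvPolynomial (Fin (m + 1)) K) := by
      apply MvPolynomial.algHom_ext
      intro i
      fin_cases i <;> simp [rename_X]
    exact DFunLike.congr_fun h2 (g k)
  have hL : (if k < m then (X ((k : ℕ) : Fin (m + 1)) : MvPolynomial (Fin (m + 1)) K)
      else C c).totalDegree ≤ 1 := by
    split_ifs
    · exact le_of_eq (totalDegree_X _)
    · simp [totalDegree_C]
  have hsub := aux_sub_td _ _ hL (by rw [← hkey]; exact hdeg)
  have hren := aux_rename_td he (g k)
  constructor
  · rw [hkey, hsub, hren]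
  · set t := (keyedF m g p c k).totalDegree with ht
    have hco := hmon
    rw [hkey, MvPolynomial.coeff_sub] at hco
    have hL0 : MvPolynomial.coeff (Finsupp.single w t)
        (if k < m then (X ((k : ℕ) : Fin (m + 1)) : MvPolynomial (Fin (m + 1)) K)
          else C c) = 0 := by
      split_ifs with h
      · rw [coeff_X', if_neg]
        intro hEq
        rcases (Finsupp.single_eq_single_iff _ _ _ _).mp hEq with ⟨_, h2⟩ | ⟨h1, _⟩ <;> omega
      · rw [MvPolynomial.coeff_C, if_neg]
        intro hEq
        apply_fun (fun f => f w) at hEq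
        rw [Finsupp.single_eq_same] at hEq
        simp at hEq
        omega
    rw [hL0, sub_zero] at hco
    have hmap : Finsupp.mapDomain (![w, mm] : Fin 2 → Fin (m + 1))
        (Finsupp.single (0 : Fin 2) t) = Finsupp.single w t := by
      rw [Finsupp.mapDomain_single]
      rfl
    have h5 := coeff_rename_mapDomain (![w, mm] : Fin 2 → Fin (m + 1)) he (g k)
      (Finsupp.single (0 : Fin 2) t)
    rw [hmap] at h5
    rw [← h5]
    exact hco

/-- (`n = m + 1 ≥ 2`.) (a) `deg ŝ_i = ∏_{k=1}^n d_k - ∏_{k=1}^i d_k`;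
(b) any monomial `t` outside the DRL initial ideal with `deg t ≤ deg s_i` satisfies
`deg t̂ ≤ deg ŝ_i`, strictly if `t ≠ s_i`. -/
theorem stmt_10 {K : Type*} [Field K] (m : ℕ) (hm : 1 ≤ m)
    (g : ℕ → MvPolynomial (Fin 2) K) (p c : K)
    (hgnc : ∀ k ≤ m, 0 < (g k).totalDegree)
    (hzero : ∃ z : Fin (m + 1) → K, ∀ k ≤ m, eval z (keyedF m g p c k) = 0)
    (hdeg : ∀ k ≤ m, 2 ≤ (keyedF m g p c k).totalDegree)
    (hmon : ∀ k, 1 ≤ k → k ≤ m →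
      (keyedF m g p c k).coeff (Finsupp.single (((k - 1 : ℕ)) : Fin (m + 1))
        ((keyedF m g p c k).totalDegree)) ≠ 0) :
    (∀ i : ℕ, i < m →
      (substY m g p (sMono m g p c i)).natDegree
        = ∏ k ∈ Finset.range (m + 1), (keyedF m g p c k).totalDegree
          - ∏ k ∈ Finset.range (i + 1), (keyedF m g p c k).totalDegree)
    ∧ ∀ i : ℕ, i < m → ∀ a : Fin (m + 1) →₀ ℕ,
        a ((m : ℕ) : Fin (m + 1)) < (keyedF m g p c 0).totalDegree →
        (∀ v : ℕ, v < m →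
          a ((v : ℕ) : Fin (m + 1)) < (keyedF m g p c (v + 1)).totalDegree) →
        expDeg a ≤ expDeg (sMono m g p c i) →
        (substY m g p a).natDegree ≤ (substY m g p (sMono m g p c i)).natDegree
          ∧ (a ≠ sMono m g p c i →
              (substY m g p a).natDegree < (substY m g p (sMono m g p c i)).natDegree) := by
  classical
  -- degrees of the ĝ chain
  have hghat : ∀ j, j < m → (ghat g p j).natDegree
      = ∏ k ∈ Finset.range (j + 1), (keyedF m g p c k).totalDegree := by
    intro j
    induction j with
    | zero =>
      intro _
      rw [Finset.prod_range_one]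
      exact aux_g0 m hm g p c (hdeg 0 (by omega))
    | succ n ih =>
      intro hn
      have h1 := ih (by omega)
      obtain ⟨htd, hco⟩ := aux_gk m g p c (n + 1) (by omega) (by omega)
        (hdeg (n + 1) (by omega)) (hmon (n + 1) (by omega) (by omega))
      have hD2 : 2 ≤ (ghat g p n).natDegree := by
        rw [h1]
        have hfac : ∀ k ∈ Finset.range (n + 1), 1 ≤ (keyedF m g p c k).totalDegree := by
          intro k hk
          have hk2 := Finset.mem_range.mp hk
          have := hdeg k (by omega); omega
        calc 2 ≤ (keyedF m g p c 0).totalDegree := hdeg 0 (by omega)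
          _ ≤ ∏ k ∈ Finset.range (n + 1), (keyedF m g p c k).totalDegree :=
            Finset.single_le_prod' hfac (Finset.mem_range.mpr (by omega))
      have hcomp := aux_comp_deg (g (n + 1)) (ghat g p n) (by rw [htd]; exact hco) hD2
      rw [show ghat g p (n + 1)
          = MvPolynomial.aeval ![ghat g p n, Polynomial.X] (g (n + 1)) from rfl,
        hcomp, htd, h1, Finset.prod_range_succ _ (n + 1)]
      ring
  have hgne : ∀ j, j < m → ghat g p j ≠ 0 := by
    intro j hj h0
    have h1 := hghat j hj
    rw [h0, Polynomial.natDegree_zero] at h1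
    have h2 : 2 ≤ ∏ k ∈ Finset.range (j + 1), (keyedF m g p c k).totalDegree := by
      have hfac : ∀ k ∈ Finset.range (j + 1), 1 ≤ (keyedF m g p c k).totalDegree := by
        intro k hk
        have hk2 := Finset.mem_range.mp hk
        have := hdeg k (by omega); omega
      calc 2 ≤ (keyedF m g p c 0).totalDegree := hdeg 0 (by omega)
        _ ≤ _ := Finset.single_le_prod' hfac (Finset.mem_range.mpr (by omega))
    omega
  have hsubst : ∀ a : Fin (m + 1) →₀ ℕ, (substY m g p a).natDegree
      = a ((m : ℕ) : Fin (m + 1)) + ∑ j ∈ Finset.range m, a ((j : ℕ) : Fin (m + 1))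
          * ∏ k ∈ Finset.range (j + 1), (keyedF m g p c k).totalDegree := by
    intro a
    have hne : ∀ j ∈ Finset.range m, (ghat g p j) ^ (a ((j : ℕ) : Fin (m + 1))) ≠ 0 :=
      fun j hj => pow_ne_zero _ (hgne j (Finset.mem_range.mp hj))
    rw [substY, Polynomial.natDegree_mul (pow_ne_zero _ Polynomial.X_ne_zero)
        (Finset.prod_ne_zero_iff.mpr hne),
      Polynomial.natDegree_X_pow, Polynomial.natDegree_prod _ _ hne]
    congr 1
    refine Finset.sum_congr rfl fun j hj => ?_
    rw [Polynomial.natDegree_pow, hghat j (Finset.mem_range.mp hj)]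
  have hexp : ∀ a : Fin (m + 1) →₀ ℕ,
      expDeg a = ∑ j ∈ Finset.range (m + 1), a ((j : ℕ) : Fin (m + 1)) := by
    intro a
    rw [expDeg, Finsupp.sum_fintype _ _ (fun _ => rfl),
      ← Fin.sum_univ_eq_sum_range (fun j => a ((j : ℕ) : Fin (m + 1))) (m + 1)]
    exact Finset.sum_congr rfl fun i _ => by rw [Fin.cast_val_eq_self]
  have hcinj : ∀ j, j ≤ m → ∀ l, l ≤ m →
      ((j : ℕ) : Fin (m + 1)) = ((l : ℕ) : Fin (m + 1)) → j = l := by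
    intro j hj l hl h
    apply_fun Fin.val at h
    rwa [Fin.val_cast_of_lt (by omega), Fin.val_cast_of_lt (by omega)] at h
  have hsmc : ∀ i j, j < m → sMono m g p c i ((j : ℕ) : Fin (m + 1))
      = if i ≤ j then (keyedF m g p c (j + 1)).totalDegree - 1 else 0 := by
    intro i j hj
    simp only [sMono, Finsupp.finset_sum_apply]
    by_cases hij : i ≤ j
    · rw [Finset.sum_eq_single_of_mem j (Finset.mem_Ico.mpr ⟨hij, hj⟩)
        (fun v hv hvj => by
          rw [Finsupp.single_apply, if_neg]
          intro h
          exact hvj (hcinj v (by have := (Finset.mem_Ico.mp hv).2; omega) j (by omega) h)),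
        Finsupp.single_eq_same, if_pos hij]
    · rw [if_neg hij]
      apply Finset.sum_eq_zero
      intro v hv
      have hv2 := Finset.mem_Ico.mp hv
      rw [Finsupp.single_apply, if_neg]
      intro h
      have := hcinj v (by omega) j (by omega) h
      omega
  have hsmm : ∀ i, sMono m g p c i ((m : ℕ) : Fin (m + 1)) = 0 := by
    intro i
    simp only [sMono, Finsupp.finset_sum_apply]
    apply Finset.sum_eq_zero
    intro v hv
    have hv2 := Finset.mem_Ico.mp hv
    rw [Finsupp.single_apply, if_neg]
    intro h
    have := hcinj v (by omega) m le_rfl h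
    omega
  constructor
  · -- part (a)
    intro i hi
    rw [hsubst, hsmm i, zero_add]
    have hsum : ∑ j ∈ Finset.range m, sMono m g p c i ((j : ℕ) : Fin (m + 1))
          * ∏ k ∈ Finset.range (j + 1), (keyedF m g p c k).totalDegree
        = ∑ l ∈ Finset.Ico i m, ((keyedF m g p c (l + 1)).totalDegree - 1)
          * ∏ k ∈ Finset.range (l + 1), (keyedF m g p c k).totalDegree := by
      rw [← Finset.sum_range_add_sum_Ico _ (le_of_lt hi),
        Finset.sum_eq_zero (fun j hj => by
          have hj2 := Finset.mem_range.mp hj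
          rw [hsmc i j (by omega), if_neg (by omega), zero_mul]), zero_add]
      refine Finset.sum_congr rfl fun l hl => ?_
      have hl2 := Finset.mem_Ico.mp hl
      rw [hsmc i l hl2.2, if_pos hl2.1]
    rw [hsum]
    have htel := aux_tel m (fun k => (keyedF m g p c k).totalDegree)
      (fun jj => ∏ k ∈ Finset.range (jj + 1), (keyedF m g p c k).totalDegree)
      (fun k hk => by exact Nat.one_le_of_lt (hdeg k hk))
      (fun jj => Finset.prod_range_succ _ _)
      m le_rfl i (le_of_lt hi)
    exact Nat.eq_sub_of_add_eq htel
  · -- part (b)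
    intro i hi a ham hav hle
    have hcore : a ≠ sMono m g p c i →
        (substY m g p a).natDegree + 1 ≤ (substY m g p (sMono m g p c i)).natDegree := by
      intro hne
      have hne' : ∃ j, j ≤ m ∧
          a ((j : ℕ) : Fin (m + 1)) ≠ sMono m g p c i ((j : ℕ) : Fin (m + 1)) := by
        by_contra h
        push_neg at h
        apply hne
        ext x
        have hx := Fin.cast_val_eq_self x
        have h2 := h x.val (Nat.lt_succ_iff.mp x.isLt)
        rwa [hx] at h2
      have H := aux_core m i (fun k => (keyedF m g p c k).totalDegree)
        (fun jj => ∏ k ∈ Finset.range (jj + 1), (keyedF m g p c k).totalDegree)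
        (fun j => a ((j : ℕ) : Fin (m + 1)))
        (fun j => sMono m g p c i ((j : ℕ) : Fin (m + 1)))
        hdeg (by simp) (fun jj => Finset.prod_range_succ _ _) hi
        (fun j hj => hsmc i j hj) (hsmm i) (fun j hj => hav j hj) ham
        (by rw [← hexp a, ← hexp (sMono m g p c i)]; exact hle) hne'
      rw [hsubst a, hsubst (sMono m g p c i)]
      exact H
    constructor
    · by_cases hne : a = sMono m g p c i
      · rw [hne]
      · have := hcore hne; omega
    · intro hne
      have := hcore hne; omega
end

section
/- Let K be a field, let n ≥ 4, and let F be a keyed iterated polynomial system for Feistel-2n/n such that d_i := deg f_{L,i} ≥ 2 for all 1 ≤ i ≤ n and the monomial x_{L,i−1}^{d_i} occurs in f_{L,i} for all 2 ≤ i ≤ n. Define ĥ_1 = p_R + g_1(p_L,y), ĥ_2 = p_L + g_2(ĥ_1(y),y), ĥ_i = ĥ_{i−2} + g_i(ĥ_{i−1}(y),y) for 3 ≤ i ≤ n−1, and ĥ_n = ĥ_{n−2} + g_n(ĥ_{n−1}(y),y) − c_L, all in K[y]. Then {x_{R,2} − ĥ_1, x_{R,3} − ĥ_2, …, x_{R,n−1}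 − ĥ_{n−2}, x_{L,n−1} − ĥ_{n−1}, ĥ_n} is a Gröbner basis of the ideal (H) generated by the downsized system with respect to the lexicographic order x_{R,2} > ⋯ > x_{R,n−1} > x_{L,n−1} > y, and deg ĥ_i = ∏_{k=1}^{i} d_k for all 1 ≤ i ≤ n; in particular (H) ∩ K[y] = (ĥ_n) with deg ĥ_n = ∏_{k=1}^{n} d_k. -/
open MvPolynomial
open Fin.NatCast

noncomputable def psiW {K : Type*} [Field K] (m : ℕ) (g : ℕ → MvPolynomial (Fin 2) K)
    (pL pR : K) : MvPolynomial (Fin (m + 1)) K →ₐ[K] Polynomial K :=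
  aeval (fun j : Fin (m + 1) => if (j : ℕ) < m then hHat g pL pR (j : ℕ) else Polynomial.X)

noncomputable def GB {K : Type*} [Field K] (m : ℕ) (g : ℕ → MvPolynomial (Fin 2) K)
    (pL pR cL : K) (k : ℕ) : MvPolynomial (Fin (m + 1)) K :=
  if k < m then X ((k : ℕ) : Fin (m + 1)) - yPoly m (hHat g pL pR k)
  else yPoly m (hHat g pL pR m - Polynomial.C cL)

section Helpers
variable {K : Type*} [Field K]



lemma comp_aeval_two {S T : Type*} [CommSemiring S] [CommSemiring T] [Algebra K S] [Algebra K T]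
    (φ : S →ₐ[K] T) (u v : S) (G : MvPolynomial (Fin 2) K) :
    φ (aeval ![u, v] G) = aeval ![φ u, φ v] G := by
  have h : (fun i => φ (![u, v] i)) = ![φ u, φ v] := by
    funext i; fin_cases i <;> simp
  rw [show φ (aeval ![u, v] G) = (φ.comp (aeval ![u, v])) G from rfl, MvPolynomial.comp_aeval, h]

lemma sub_dvd_aeval_two {S : Type*} [CommRing S] [Algebra K S] (u v t : S)
    (G : MvPolynomial (Fin 2) K) :
    (u - v) ∣ (aeval ![u, t] G - aeval ![v, t] G) := by
  induction G using MvPolynomial.induction_on with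
  | C a => simp
  | add p q hp hq =>
      have : aeval ![u,t] (p+q) - aeval ![v,t] (p+q)
          = (aeval ![u,t] p - aeval ![v,t] p) + (aeval ![u,t] q - aeval ![v,t] q) := by
        simp only [map_add]; ring
      rw [this]; exact dvd_add hp hq
  | mul_X p i hp =>
      fin_cases i
      · show (u - v) ∣ (aeval ![u, t] (p * X 0) - aeval ![v, t] (p * X 0))
        have : aeval ![u,t] (p * X 0) - aeval ![v,t] (p * X 0)
            = (aeval ![u,t] p - aeval ![v,t] p) * u + aeval ![v,t] p * (u - v) := by
          simp only [map_mul, aeval_X]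
          simp only [Matrix.cons_val_zero]; ring
        rw [this]; exact dvd_add (Dvd.dvd.mul_right hp u) (dvd_mul_left _ _)
      · show (u - v) ∣ (aeval ![u, t] (p * X 1) - aeval ![v, t] (p * X 1))
        have : aeval ![u,t] (p * X 1) - aeval ![v,t] (p * X 1)
            = (aeval ![u,t] p - aeval ![v,t] p) * t := by
          simp only [map_mul, aeval_X]
          simp only [Matrix.cons_val_one, Matrix.head_cons, Matrix.cons_val_zero]; ring
        rw [this]; exact Dvd.dvd.mul_right hp t

lemma aevalX_eq_sum {σ : Type*} (t : σ) (p : Polynomial K) :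
    (Polynomial.aeval (X t : MvPolynomial σ K) p)
      = ∑ j ∈ p.support, monomial (Finsupp.single t j) (p.coeff j) := by
  rw [Polynomial.aeval_def, Polynomial.eval₂_eq_sum, Polynomial.sum]
  refine Finset.sum_congr rfl fun j hj => ?_
  rw [show (algebraMap K (MvPolynomial σ K)) (p.coeff j) = C (p.coeff j) from rfl,
    C_mul_X_pow_eq_monomial]

lemma coeff_aevalX {σ : Type*} (t : σ) (p : Polynomial K) (j : ℕ) :
    coeff (Finsupp.single t j) (Polynomial.aeval (X t : MvPolynomial σ K) p) = p.coeff j := by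
  classical
  rw [aevalX_eq_sum]
  rw [show coeff (Finsupp.single t j) (∑ i ∈ p.support, monomial (Finsupp.single t i) (p.coeff i))
    = ∑ i ∈ p.support, coeff (Finsupp.single t j) (monomial (Finsupp.single t i) (p.coeff i))
    from by rw [MvPolynomial.coeff_sum]]
  rw [Finset.sum_eq_single j]
  · simp [MvPolynomial.coeff_monomial]
  · intro b hb hbj
    rw [MvPolynomial.coeff_monomial, if_neg]
    intro h
    exact hbj (Finsupp.single_injective t h)
  · intro hj
    simp [MvPolynomial.coeff_monomial, Polynomial.notMem_support_iff.mp hj]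

lemma support_aevalX {σ : Type*} (t : σ) (p : Polynomial K)
    {a : σ →₀ ℕ} (ha : a ∈ (Polynomial.aeval (X t : MvPolynomial σ K) p).support) :
    ∃ j ∈ p.support, a = Finsupp.single t j := by
  classical
  rw [aevalX_eq_sum] at ha
  have ha' := MvPolynomial.support_sum ha
  simp only [Finset.mem_biUnion] at ha'
  obtain ⟨j, hj, ha''⟩ := ha'
  have := MvPolynomial.support_monomial_subset ha''
  simp only [Finset.mem_singleton] at this
  exact ⟨j, hj, this⟩



lemma exists_max_degree_monomial {σ : Type*} {p : MvPolynomial σ K} (h : p ≠ 0) :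
    ∃ a ∈ p.support, (a.sum fun _ e => e) = p.totalDegree := by
  obtain ⟨a, ha, he⟩ := Finset.exists_mem_eq_sup p.support
    (MvPolynomial.support_nonempty.mpr h) (fun a => a.sum fun _ e => e)
  exact ⟨a, ha, he.symm⟩

lemma totalDegree_rename_inj {σ τ : Type*} (f : σ → τ) (hf : Function.Injective f)
    (p : MvPolynomial σ K) : (rename f p).totalDegree = p.totalDegree := by
  refine le_antisymm (totalDegree_rename_le f p) ?_
  by_cases hp : p = 0
  · simp [hp]
  obtain ⟨a, ha, he⟩ := exists_max_degree_monomial hp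
  have hmem : Finsupp.mapDomain f a ∈ (rename f p).support := by
    rw [mem_support_iff, coeff_rename_mapDomain f hf]
    exact mem_support_iff.mp ha
  have h2 := le_totalDegree hmem
  rwa [Finsupp.sum_mapDomain_index (fun _ => rfl) (fun _ _ _ => rfl), he] at h2

lemma aeval_two_expand (G : MvPolynomial (Fin 2) K) (u v : Polynomial K) :
    aeval ![u, v] G
      = ∑ a ∈ G.support, Polynomial.C (G.coeff a) * u ^ (a 0) * v ^ (a 1) := by
  conv_lhs => rw [← support_sum_monomial_coeff G]
  rw [map_sum]
  refine Finset.sum_congr rfl fun a _ => ?_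
  rw [aeval_monomial, Finsupp.prod_fintype _ _ (fun i => pow_zero _), Fin.prod_univ_two]
  simp only [Matrix.cons_val_zero, Matrix.cons_val_one, Matrix.head_cons,
    Polynomial.algebraMap_eq]
  ring

lemma natDegree_aeval_comp (G : MvPolynomial (Fin 2) K) (q : Polynomial K) {d : ℕ}
    (hdle : G.totalDegree ≤ d) (hc : G.coeff (Finsupp.single 0 d) ≠ 0)
    (hD : 2 ≤ q.natDegree) :
    (aeval ![q, Polynomial.X] G).natDegree = d * q.natDegree ∧
      (aeval ![q, Polynomial.X] G).coeff (d * q.natDegree) ≠ 0 := by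
  classical
  have hq0 : q ≠ 0 := fun h => by rw [h, Polynomial.natDegree_zero] at hD; omega
  set D := q.natDegree with hDdef
  have hsum : ∀ a ∈ G.support, a 0 + a 1 ≤ d := by
    intro a ha
    have := MvPolynomial.le_totalDegree ha
    rw [Finsupp.sum_fintype _ _ (fun i => rfl), Fin.sum_univ_two] at this
    omega
  have hbound : ∀ a ∈ G.support,
      (Polynomial.C (G.coeff a) * q ^ (a 0) * Polynomial.X ^ (a 1)).natDegree
        ≤ a 0 * D + a 1 := by
    intro a _
    refine le_trans (Polynomial.natDegree_mul_le) ?_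
    have h1 : (Polynomial.C (G.coeff a) * q ^ (a 0)).natDegree ≤ a 0 * D := by
      refine le_trans (Polynomial.natDegree_mul_le) ?_
      simp [Polynomial.natDegree_C, Polynomial.natDegree_pow, ← hDdef]
    have h2 : ((Polynomial.X : Polynomial K) ^ (a 1)).natDegree ≤ a 1 := by
      simp [Polynomial.natDegree_X_pow]
    omega
  have hstrict : ∀ a ∈ G.support, a ≠ Finsupp.single 0 d → a 0 * D + a 1 < d * D := by
    intro a ha hne
    have h01 := hsum a ha
    by_cases he0 : a 0 = d
    · exfalso
      apply hne
      have he1 : a 1 = 0 := by omega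
      ext i
      fin_cases i
      · simp [he0, Finsupp.single_eq_same]
      · simp [he1, Finsupp.single_eq_of_ne' (show (0 : Fin 2) ≠ 1 by decide)]
    · have hlt : a 0 < d := lt_of_le_of_ne (by omega) he0
      obtain ⟨c, hcc⟩ := Nat.exists_eq_add_of_lt hlt
      have h2 : (c + 1) * 2 ≤ (c + 1) * D := Nat.mul_le_mul_left _ hD
      have h3 : d * D = a 0 * D + (c + 1) * D := by rw [hcc]; ring
      omega
  have a0mem : (Finsupp.single 0 d : Fin 2 →₀ ℕ) ∈ G.support := mem_support_iff.mpr hc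
  have hterm0 : (Polynomial.C (G.coeff (Finsupp.single 0 d)) * q ^ ((Finsupp.single 0 d : Fin 2 →₀ ℕ) 0)
      * Polynomial.X ^ ((Finsupp.single 0 d : Fin 2 →₀ ℕ) 1)).coeff (d * D)
      = G.coeff (Finsupp.single 0 d) * q.leadingCoeff ^ d := by
    simp only [Finsupp.single_eq_same, Finsupp.single_eq_of_ne' (show (0 : Fin 2) ≠ 1 by decide)]
    rw [pow_zero, mul_one, Polynomial.coeff_C_mul]
    rw [show d * D = (q ^ d).natDegree by rw [Polynomial.natDegree_pow]]
    rw [Polynomial.coeff_natDegree, Polynomial.leadingCoeff_pow]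
  have hcoeff : (aeval ![q, Polynomial.X] G).coeff (d * D)
      = G.coeff (Finsupp.single 0 d) * q.leadingCoeff ^ d := by
    rw [aeval_two_expand, Polynomial.finset_sum_coeff]
    rw [Finset.sum_eq_single (Finsupp.single 0 d)]
    · exact hterm0
    · intro b hb hbne
      exact Polynomial.coeff_eq_zero_of_natDegree_lt
        (lt_of_le_of_lt (hbound b hb) (hstrict b hb hbne))
    · intro h; exact absurd a0mem h
  have hcne : (aeval ![q, Polynomial.X] G).coeff (d * D) ≠ 0 := by
    rw [hcoeff]
    exact mul_ne_zero hc (pow_ne_zero _ (Polynomial.leadingCoeff_ne_zero.mpr hq0))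
  constructor
  · refine le_antisymm ?_ (Polynomial.le_natDegree_of_ne_zero hcne)
    rw [aeval_two_expand]
    refine Polynomial.natDegree_sum_le_of_forall_le _ _ fun a ha => ?_
    refine le_trans (hbound a ha) ?_
    have := hsum a ha
    have : (a 0 + a 1) * D ≤ d * D := Nat.mul_le_mul_right _ this
    have hD1 : 1 ≤ D := by omega
    nlinarith [Nat.mul_le_mul_left (a 1) hD1]
  · exact hcne


lemma fin_cast_ne {N a b : ℕ} [NeZero N] (ha : a < N) (hb : b < N) (hab : a ≠ b) :
    (a : Fin N) ≠ (b : Fin N) := by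
  intro h
  apply hab
  have := congrArg Fin.val h
  rwa [Fin.val_cast_of_lt ha, Fin.val_cast_of_lt hb] at this

lemma sum_single' {σ : Type*} (i : σ) (e : ℕ) :
    ((Finsupp.single i e).sum fun _ x => x) = e := Finsupp.sum_single_index rfl

lemma sum_mapDomain' {σ τ : Type*} (f : σ → τ) (a : σ →₀ ℕ) :
    ((Finsupp.mapDomain f a).sum fun _ x => x) = a.sum fun _ x => x :=
  Finsupp.sum_mapDomain_index (fun _ => rfl) (fun _ _ _ => rfl)

lemma ne_of_sum_ne {σ : Type*} {u v : σ →₀ ℕ}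
    (h : (u.sum fun _ x => x) ≠ (v.sum fun _ x => x)) : u ≠ v :=
  fun e => h (by rw [e])

end Helpers

section FeistelDeg
variable {K : Type*} [Field K] (m : ℕ) (g : ℕ → MvPolynomial (Fin 2) K) (pL pR cL : K)

/-- transfer of degree and top-coefficient data from `fstL k` to `g k`, for `1 ≤ k ≤ m`. -/
lemma deg_g_eq (hm : 3 ≤ m) {k : ℕ} (h1 : 1 ≤ k) (hkm : k ≤ m)
    (hdeg2 : 2 ≤ (fstL m g pL pR cL k).totalDegree)
    (hmonk : (fstL m g pL pR cL k).coeff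
      (Finsupp.single (((2 * (k - 1) : ℕ)) : Fin (2 * m + 1))
        ((fstL m g pL pR cL k).totalDegree)) ≠ 0) :
    (g k).totalDegree = (fstL m g pL pR cL k).totalDegree ∧
    (g k).coeff (Finsupp.single 0 ((fstL m g pL pR cL k).totalDegree)) ≠ 0 := by
  classical
  have hk0 : k ≠ 0 := by omega
  set N := 2 * m + 1 with hN
  set a' : Fin N := ((2 * (k - 1) : ℕ) : Fin N) with ha'
  set b' : Fin N := ((2 * (k - 1) + 1 : ℕ) : Fin N) with hb'
  set t' : Fin N := ((2 * m : ℕ) : Fin N) with ht'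
  set f : Fin 2 → Fin N := ![a', t'] with hf
  have hat : a' ≠ t' := fin_cast_ne (by omega) (by omega) (by omega)
  have hab : a' ≠ b' := fin_cast_ne (by omega) (by omega) (by omega)
  have hbt : b' ≠ t' := fin_cast_ne (by omega) (by omega) (by omega)
  have hfinj : Function.Injective f := by
    intro i j hij
    fin_cases i <;> fin_cases j <;> simp_all [hf]
  have hXf : (X ∘ f : Fin 2 → MvPolynomial (Fin N) K) = ![X a', X t'] := by
    funext i; fin_cases i <;> simp [hf]
  have hren : aeval ![X a', X t'] (g k) = rename f (g k) := by
    rw [show (rename f : MvPolynomial (Fin 2) K →ₐ[K] MvPolynomial (Fin N) K)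
      = aeval (X ∘ f) from by ext i; simp, hXf]
  have hfk : fstL m g pL pR cL k
      = X b' + rename f (g k) - (if k < m then X ((2 * k : ℕ) : Fin N) else C cL) := by
    rw [fstL, if_neg hk0, if_neg hk0, hren]
  -- coefficient transfer at monomials of total degree ≥ 2 supported like the rename image
  have hcoeff_a : ∀ e : ℕ, 2 ≤ e →
      coeff (Finsupp.single a' e) (fstL m g pL pR cL k) = (g k).coeff (Finsupp.single 0 e) := by
    intro e he
    rw [hfk]
    rw [coeff_sub, coeff_add]
    have h1 : coeff (Finsupp.single a' e) (X b' : MvPolynomial (Fin N) K) = 0 := by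
      rw [coeff_X', if_neg]
      apply ne_of_sum_ne
      rw [sum_single', sum_single']
      omega
    have h2 : coeff (Finsupp.single a' e) (rename f (g k)) = (g k).coeff (Finsupp.single 0 e) := by
      have : (Finsupp.single a' e) = Finsupp.mapDomain f (Finsupp.single 0 e) := by
        rw [Finsupp.mapDomain_single]
        rfl
      rw [this, coeff_rename_mapDomain f hfinj]
    have h3 : coeff (Finsupp.single a' e) (if k < m then (X ((2 * k : ℕ) : Fin N) : MvPolynomial (Fin N) K) else C cL) = 0 := by
      split
      · rw [coeff_X', if_neg]
        apply ne_of_sum_ne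
        rw [sum_single', sum_single']
        omega
      · rw [coeff_C, if_neg]
        apply ne_of_sum_ne
        rw [sum_single', Finsupp.sum_zero_index]
        omega
    rw [h1, h2, h3]
    ring
  set d := (fstL m g pL pR cL k).totalDegree with hd
  have hgtop : (g k).coeff (Finsupp.single 0 d) ≠ 0 := by
    rw [← hcoeff_a d hdeg2]; exact hmonk
  have hdle : d ≤ (g k).totalDegree := by
    have := le_totalDegree (mem_support_iff.mpr hgtop)
    rwa [sum_single'] at this
  have hgle : (g k).totalDegree ≤ d := by
    by_contra hcon
    push_neg at hcon
    have hg0 : g k ≠ 0 := fun h => by simp [h] at hgtop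
    obtain ⟨a, ha, hde⟩ := exists_max_degree_monomial hg0
    have hsum : ((Finsupp.mapDomain f a).sum fun _ x => x) = (g k).totalDegree := by
      rw [sum_mapDomain', hde]
    have hcM : coeff (Finsupp.mapDomain f a) (fstL m g pL pR cL k) = (g k).coeff a := by
      rw [hfk, coeff_sub, coeff_add]
      have h1 : coeff (Finsupp.mapDomain f a) (X b' : MvPolynomial (Fin N) K) = 0 := by
        rw [coeff_X', if_neg]
        apply ne_of_sum_ne
        rw [sum_single', hsum]
        omega
      have h2 := coeff_rename_mapDomain f hfinj (g k) a
      have h3 : coeff (Finsupp.mapDomain f a) (if k < m then (X ((2 * k : ℕ) : Fin N) : MvPolynomial (Fin N) K) else C cL) = 0 := by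
        split
        · rw [coeff_X', if_neg]
          apply ne_of_sum_ne
          rw [sum_single', hsum]
          omega
        · rw [coeff_C, if_neg]
          apply ne_of_sum_ne
          rw [hsum, Finsupp.sum_zero_index]
          omega
      rw [h1, h2, h3]
      ring
    have hmem : Finsupp.mapDomain f a ∈ (fstL m g pL pR cL k).support := by
      rw [mem_support_iff, hcM]
      exact mem_support_iff.mp ha
    have := le_totalDegree hmem
    rw [hsum] at this
    omega
  exact ⟨le_antisymm hgle hdle, hgtop⟩

/-- pushing a univariate polynomial into the multivariate ring along `y ↦ X t`. -/
lemma totalDegree_aevalX {σ : Type*} (t : σ) {p : Polynomial K} (hp : p ≠ 0) :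
    (Polynomial.aeval (X t : MvPolynomial σ K) p).totalDegree = p.natDegree := by
  apply le_antisymm
  · rw [MvPolynomial.totalDegree]
    apply Finset.sup_le
    intro a ha
    obtain ⟨j, hj, rfl⟩ := support_aevalX t p ha
    rw [sum_single']
    exact Polynomial.le_natDegree_of_ne_zero (Polynomial.mem_support_iff.mp hj)
  · have hmem : Finsupp.single t p.natDegree
        ∈ (Polynomial.aeval (X t : MvPolynomial σ K) p).support := by
      rw [mem_support_iff, coeff_aevalX, Polynomial.coeff_natDegree]
      exact Polynomial.leadingCoeff_ne_zero.mpr hp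
    have := le_totalDegree hmem
    rwa [sum_single'] at this

lemma Y_hHat0 {σ : Type*} (t : σ) :
    Polynomial.aeval (X t : MvPolynomial σ K) (hHat g pL pR 0)
      = C pR + aeval ![(C pL : MvPolynomial σ K), X t] (g 0) := by
  rw [show hHat g pL pR 0 = Polynomial.C pR + aeval ![Polynomial.C pL, Polynomial.X] (g 0)
    from rfl]
  rw [map_add, comp_aeval_two]
  simp

lemma Y_hHat1 {σ : Type*} (t : σ) :
    Polynomial.aeval (X t : MvPolynomial σ K) (hHat g pL pR 1)
      = C pL + aeval ![Polynomial.aeval (X t : MvPolynomial σ K) (hHat g pL pR 0), X t] (g 1) := by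
  rw [show hHat g pL pR 1 = Polynomial.C pL + aeval ![hHat g pL pR 0, Polynomial.X] (g 1)
    from rfl]
  rw [map_add, comp_aeval_two]
  simp

lemma Y_hHat_succ {σ : Type*} (t : σ) (k : ℕ) :
    Polynomial.aeval (X t : MvPolynomial σ K) (hHat g pL pR (k + 2))
      = Polynomial.aeval (X t : MvPolynomial σ K) (hHat g pL pR k)
        + aeval ![Polynomial.aeval (X t : MvPolynomial σ K) (hHat g pL pR (k + 1)), X t]
            (g (k + 2)) := by
  rw [show hHat g pL pR (k + 2)
    = hHat g pL pR k + aeval ![hHat g pL pR (k + 1), Polynomial.X] (g (k + 2)) from rfl]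
  rw [map_add, comp_aeval_two]
  simp

lemma fstL_zero (hm : 3 ≤ m) :
    fstL m g pL pR cL 0
      = Polynomial.aeval (X ((2 * m : ℕ) : Fin (2 * m + 1))) (hHat g pL pR 0)
        - X ((0 : ℕ) : Fin (2 * m + 1)) := by
  rw [fstL, if_pos rfl, if_pos rfl, if_pos (show 0 < m by omega), Y_hHat0]

lemma deg_hHat0 (hm : 3 ≤ m) (hdeg2 : 2 ≤ (fstL m g pL pR cL 0).totalDegree) :
    (hHat g pL pR 0).natDegree = (fstL m g pL pR cL 0).totalDegree := by
  classical
  set N := 2 * m + 1 with hN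
  set t' : Fin N := ((2 * m : ℕ) : Fin N) with ht'
  set z' : Fin N := ((0 : ℕ) : Fin N) with hz'
  set p := hHat g pL pR 0 with hp
  have hfk : fstL m g pL pR cL 0 = Polynomial.aeval (X t') p - X z' := fstL_zero m g pL pR cL hm
  have hp0 : p ≠ 0 := by
    intro h
    rw [hfk, h, map_zero, zero_sub, totalDegree_neg, totalDegree_X] at hdeg2
    omega
  set d := (fstL m g pL pR cL 0).totalDegree with hd
  have hle : d ≤ max p.natDegree 1 := by
    rw [hd, hfk]
    refine le_trans (totalDegree_sub _ _) ?_
    rw [totalDegree_aevalX t' hp0, totalDegree_X]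
  have hge : p.natDegree ≤ d := by
    have hcoeff : coeff (Finsupp.single t' p.natDegree) (fstL m g pL pR cL 0) ≠ 0 := by
      rw [hfk, coeff_sub, coeff_aevalX, Polynomial.coeff_natDegree]
      have hz : coeff (Finsupp.single t' p.natDegree) (X z' : MvPolynomial (Fin N) K) = 0 := by
        rw [coeff_X', if_neg]
        intro h
        have h2 := DFunLike.congr_fun h z'
        have hzt : z' ≠ t' := fin_cast_ne (by omega) (by omega) (by omega)
        rw [Finsupp.single_eq_same, Finsupp.single_eq_of_ne' (Ne.symm hzt)] at h2
        omega
      rw [hz, sub_zero]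
      exact Polynomial.leadingCoeff_ne_zero.mpr hp0
    have := le_totalDegree (mem_support_iff.mpr hcoeff)
    rwa [sum_single'] at this
  omega

lemma hHat_deg (hm : 3 ≤ m)
    (hdeg : ∀ k ≤ m, 2 ≤ (fstL m g pL pR cL k).totalDegree)
    (hmon : ∀ k, 1 ≤ k → k ≤ m →
      (fstL m g pL pR cL k).coeff (Finsupp.single (((2 * (k - 1) : ℕ)) : Fin (2 * m + 1))
        ((fstL m g pL pR cL k).totalDegree)) ≠ 0) :
    ∀ k, k ≤ m →
      (hHat g pL pR k).natDegree
          = ∏ j ∈ Finset.range (k + 1), (fstL m g pL pR cL j).totalDegree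
        ∧ 2 ≤ (hHat g pL pR k).natDegree := by
  intro k
  induction k using Nat.strong_induction_on with
  | _ k IH =>
    match k with
    | 0 =>
      intro hkm
      have h0 := deg_hHat0 m g pL pR cL hm (hdeg 0 (by omega))
      refine ⟨?_, ?_⟩
      · rw [h0, Finset.prod_range_one]
      · rw [h0]; exact hdeg 0 (by omega)
    | 1 =>
      intro hkm
      have h0 := deg_hHat0 m g pL pR cL hm (hdeg 0 (by omega))
      obtain ⟨hg1, hc1⟩ := deg_g_eq m g pL pR cL hm (le_refl 1) hkm (hdeg 1 hkm) (hmon 1 (le_refl 1) hkm)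
      have hD0 : 2 ≤ (hHat g pL pR 0).natDegree := by rw [h0]; exact hdeg 0 (by omega)
      obtain ⟨hcompdeg, _⟩ := natDegree_aeval_comp (g 1) (hHat g pL pR 0)
        (le_of_eq hg1) hc1 hD0
      have hrec : hHat g pL pR 1
          = Polynomial.C pL + aeval ![hHat g pL pR 0, Polynomial.X] (g 1) := rfl
      have hlt : (Polynomial.C pL).natDegree
          < (aeval ![hHat g pL pR 0, Polynomial.X] (g 1)).natDegree := by
        rw [hcompdeg, Polynomial.natDegree_C]
        have h2 := hdeg 1 hkm
        nlinarith
      have hdeg1 : (hHat g pL pR 1).natDegree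
          = (fstL m g pL pR cL 1).totalDegree * (hHat g pL pR 0).natDegree := by
        rw [hrec, Polynomial.natDegree_add_eq_right_of_natDegree_lt hlt, hcompdeg]
      constructor
      · rw [hdeg1, h0, Finset.prod_range_succ, Finset.prod_range_one, mul_comm]
      · rw [hdeg1]
        have h2 := hdeg 1 hkm
        nlinarith
    | (k + 2) =>
      intro hkm
      obtain ⟨hPk, hDk⟩ := IH k (by omega) (by omega)
      obtain ⟨hPk1, hDk1⟩ := IH (k + 1) (by omega) (by omega)
      obtain ⟨hgk, hck⟩ := deg_g_eq m g pL pR cL hm (show 1 ≤ k + 2 by omega) hkm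
        (hdeg (k + 2) hkm) (hmon (k + 2) (by omega) hkm)
      obtain ⟨hcompdeg, _⟩ := natDegree_aeval_comp (g (k + 2)) (hHat g pL pR (k + 1))
        (le_of_eq hgk) hck hDk1
      have hrec : hHat g pL pR (k + 2)
          = hHat g pL pR k + aeval ![hHat g pL pR (k + 1), Polynomial.X] (g (k + 2)) := rfl
      have hlt : (hHat g pL pR k).natDegree
          < (aeval ![hHat g pL pR (k + 1), Polynomial.X] (g (k + 2))).natDegree := by
        rw [hcompdeg]
        have h2 := hdeg (k + 2) hkm
        have h3 : (hHat g pL pR k).natDegree ≤ (hHat g pL pR (k + 1)).natDegree := by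
          rw [hPk, hPk1,
            Finset.prod_range_succ (fun j => (fstL m g pL pR cL j).totalDegree) (k + 1)]
          have h4 := hdeg (k + 1) (by omega)
          exact Nat.le_mul_of_pos_right _ (by omega)
        nlinarith
      have hdeg2 : (hHat g pL pR (k + 2)).natDegree
          = (fstL m g pL pR cL (k + 2)).totalDegree * (hHat g pL pR (k + 1)).natDegree := by
        rw [hrec, Polynomial.natDegree_add_eq_right_of_natDegree_lt hlt, hcompdeg]
      constructor
      · rw [hdeg2, hPk1,
          Finset.prod_range_succ (fun j => (fstL m g pL pR cL j).totalDegree) (k + 2), mul_comm]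
      · rw [hdeg2]
        have h2 := hdeg (k + 2) hkm
        nlinarith

/-! ### identities between the downsized system and the Gröbner basis elements -/

lemma hTil0_eq (hm : 3 ≤ m) :
    hTil m g pL pR cL 0
      = -(X ((0 : ℕ) : Fin (m + 1)) - yPoly m (hHat g pL pR 0)) := by
  rw [hTil, if_pos rfl, if_pos rfl, if_pos (show 0 < m by omega), yPoly, Y_hHat0]
  ring

lemma hTil1_eq (hm : 3 ≤ m) :
    ∃ w, hTil m g pL pR cL 1
      = -(X ((1 : ℕ) : Fin (m + 1)) - yPoly m (hHat g pL pR 1))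
        + (X ((0 : ℕ) : Fin (m + 1)) - yPoly m (hHat g pL pR 0)) * w := by
  obtain ⟨w, hw⟩ := sub_dvd_aeval_two (X ((0 : ℕ) : Fin (m + 1)))
    (yPoly m (hHat g pL pR 0)) (X ((m : ℕ) : Fin (m + 1))) (g 1)
  refine ⟨w, ?_⟩
  rw [hTil, if_neg one_ne_zero, if_neg one_ne_zero, if_pos rfl, if_pos (show 1 < m by omega),
    yPoly, Y_hHat1, ← yPoly]
  have h10 : ((1 - 1 : ℕ) : Fin (m + 1)) = ((0 : ℕ) : Fin (m + 1)) := rfl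
  rw [h10, ← hw]
  ring

lemma hTil2_eq (hm : 3 ≤ m) (k : ℕ) (hk : k + 2 < m) :
    ∃ w, hTil m g pL pR cL (k + 2)
      = -(X (((k + 2 : ℕ)) : Fin (m + 1)) - yPoly m (hHat g pL pR (k + 2)))
        + (X ((k : ℕ) : Fin (m + 1)) - yPoly m (hHat g pL pR k))
        + (X (((k + 1 : ℕ)) : Fin (m + 1)) - yPoly m (hHat g pL pR (k + 1))) * w := by
  obtain ⟨w, hw⟩ := sub_dvd_aeval_two (X (((k + 1 : ℕ)) : Fin (m + 1)))
    (yPoly m (hHat g pL pR (k + 1))) (X ((m : ℕ) : Fin (m + 1))) (g (k + 2))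
  refine ⟨w, ?_⟩
  rw [hTil, if_neg (by omega), if_neg (by omega), if_neg (by omega), if_pos hk]
  have e2 : ((k + 2 - 2 : ℕ) : Fin (m + 1)) = ((k : ℕ) : Fin (m + 1)) := by norm_num
  have e1 : ((k + 2 - 1 : ℕ) : Fin (m + 1)) = ((k + 1 : ℕ) : Fin (m + 1)) := by norm_num
  rw [e2, e1, show yPoly m (hHat g pL pR (k + 2))
    = yPoly m (hHat g pL pR k)
      + aeval ![yPoly m (hHat g pL pR (k + 1)), X ((m : ℕ) : Fin (m + 1))] (g (k + 2))
    from by rw [yPoly, yPoly, yPoly, Y_hHat_succ]]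
  rw [← hw]
  ring

lemma hTilm_eq (hm : 3 ≤ m) (k : ℕ) (hk : k + 2 = m) :
    ∃ w, hTil m g pL pR cL (k + 2)
      = yPoly m (hHat g pL pR m - Polynomial.C cL)
        + (X ((k : ℕ) : Fin (m + 1)) - yPoly m (hHat g pL pR k))
        + (X (((k + 1 : ℕ)) : Fin (m + 1)) - yPoly m (hHat g pL pR (k + 1))) * w := by
  obtain ⟨w, hw⟩ := sub_dvd_aeval_two (X (((k + 1 : ℕ)) : Fin (m + 1)))
    (yPoly m (hHat g pL pR (k + 1))) (X ((m : ℕ) : Fin (m + 1))) (g (k + 2))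
  refine ⟨w, ?_⟩
  rw [hTil, if_neg (by omega), if_neg (by omega), if_neg (by omega), if_neg (by omega)]
  have e2 : ((k + 2 - 2 : ℕ) : Fin (m + 1)) = ((k : ℕ) : Fin (m + 1)) := by norm_num
  have e1 : ((k + 2 - 1 : ℕ) : Fin (m + 1)) = ((k + 1 : ℕ) : Fin (m + 1)) := by norm_num
  have hyc : yPoly m (hHat g pL pR m - Polynomial.C cL)
      = yPoly m (hHat g pL pR k)
        + aeval ![yPoly m (hHat g pL pR (k + 1)), X ((m : ℕ) : Fin (m + 1))] (g (k + 2))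
        - C cL := by
    rw [yPoly, map_sub, ← hk, yPoly, yPoly, Y_hHat_succ]
    simp
  rw [e2, e1, hyc, ← hw]
  ring

lemma GB_mem (hm : 3 ≤ m) {k : ℕ} (hk : k ≤ m) :
    GB m g pL pR cL k ∈ Ideal.span (GB m g pL pR cL '' Set.Iic m) :=
  Ideal.subset_span ⟨k, hk, rfl⟩

lemma GB_lt_eq {k : ℕ} (hk : k < m) :
    GB m g pL pR cL k = X ((k : ℕ) : Fin (m + 1)) - yPoly m (hHat g pL pR k) := if_pos hk

lemma GB_m_eq : GB m g pL pR cL m = yPoly m (hHat g pL pR m - Polynomial.C cL) :=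
  if_neg (lt_irrefl m)

lemma hTil_mem_spanGB (hm : 3 ≤ m) : ∀ k ≤ m,
    hTil m g pL pR cL k ∈ Ideal.span (GB m g pL pR cL '' Set.Iic m) := by
  intro k hkm
  match k with
  | 0 =>
    rw [hTil0_eq m g pL pR cL hm, ← GB_lt_eq m g pL pR cL (show 0 < m by omega)]
    exact neg_mem (GB_mem m g pL pR cL hm (by omega))
  | 1 =>
    obtain ⟨w, hw⟩ := hTil1_eq m g pL pR cL hm
    rw [hw, ← GB_lt_eq m g pL pR cL (show 0 < m by omega),
      ← GB_lt_eq m g pL pR cL (show 1 < m by omega)]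
    exact add_mem (neg_mem (GB_mem m g pL pR cL hm (by omega)))
      (Ideal.mul_mem_right w _ (GB_mem m g pL pR cL hm (by omega)))
  | (k + 2) =>
    rcases lt_or_eq_of_le hkm with hlt | heq
    · obtain ⟨w, hw⟩ := hTil2_eq m g pL pR cL hm k hlt
      rw [hw, ← GB_lt_eq m g pL pR cL (show k < m by omega),
        ← GB_lt_eq m g pL pR cL (show k + 1 < m by omega),
        ← GB_lt_eq m g pL pR cL (show k + 2 < m by omega)]
      exact add_mem (add_mem (neg_mem (GB_mem m g pL pR cL hm (by omega)))
          (GB_mem m g pL pR cL hm (by omega)))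
        (Ideal.mul_mem_right w _ (GB_mem m g pL pR cL hm (by omega)))
    · obtain ⟨w, hw⟩ := hTilm_eq m g pL pR cL hm k heq
      rw [hw, ← GB_lt_eq m g pL pR cL (show k < m by omega),
        ← GB_lt_eq m g pL pR cL (show k + 1 < m by omega), ← GB_m_eq m g pL pR cL]
      exact add_mem (add_mem (GB_mem m g pL pR cL hm (by omega))
          (GB_mem m g pL pR cL hm (by omega)))
        (Ideal.mul_mem_right w _ (GB_mem m g pL pR cL hm (by omega)))

lemma GB_mem_spanT (hm : 3 ≤ m) : ∀ k ≤ m,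
    GB m g pL pR cL k ∈ Ideal.span (hTil m g pL pR cL '' Set.Iic m) := by
  intro k
  induction k using Nat.strong_induction_on with
  | _ k IH =>
    intro hkm
    have hTmem : ∀ j ≤ m, hTil m g pL pR cL j
        ∈ Ideal.span (hTil m g pL pR cL '' Set.Iic m) :=
      fun j hj => Ideal.subset_span ⟨j, hj, rfl⟩
    match k with
    | 0 =>
      rw [GB_lt_eq m g pL pR cL (show 0 < m by omega),
        show X ((0 : ℕ) : Fin (m + 1)) - yPoly m (hHat g pL pR 0)
          = -(hTil m g pL pR cL 0) from by rw [hTil0_eq m g pL pR cL hm]; ring]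
      exact neg_mem (hTmem 0 (by omega))
    | 1 =>
      obtain ⟨w, hw⟩ := hTil1_eq m g pL pR cL hm
      rw [GB_lt_eq m g pL pR cL (show 1 < m by omega),
        show X ((1 : ℕ) : Fin (m + 1)) - yPoly m (hHat g pL pR 1)
          = -(hTil m g pL pR cL 1)
            + (X ((0 : ℕ) : Fin (m + 1)) - yPoly m (hHat g pL pR 0)) * w
          from by rw [hw]; ring,
        ← GB_lt_eq m g pL pR cL (show 0 < m by omega)]
      exact add_mem (neg_mem (hTmem 1 (by omega)))
        (Ideal.mul_mem_right w _ (IH 0 (by omega) (by omega)))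
    | (k + 2) =>
      rcases lt_or_eq_of_le hkm with hlt | heq
      · obtain ⟨w, hw⟩ := hTil2_eq m g pL pR cL hm k hlt
        rw [GB_lt_eq m g pL pR cL hlt,
          show X (((k + 2 : ℕ)) : Fin (m + 1)) - yPoly m (hHat g pL pR (k + 2))
            = -(hTil m g pL pR cL (k + 2))
              + (X ((k : ℕ) : Fin (m + 1)) - yPoly m (hHat g pL pR k))
              + (X (((k + 1 : ℕ)) : Fin (m + 1)) - yPoly m (hHat g pL pR (k + 1))) * w
            from by rw [hw]; ring,
          ← GB_lt_eq m g pL pR cL (show k < m by omega),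
          ← GB_lt_eq m g pL pR cL (show k + 1 < m by omega)]
        exact add_mem (add_mem (neg_mem (hTmem (k + 2) (by omega)))
            (IH k (by omega) (by omega)))
          (Ideal.mul_mem_right w _ (IH (k + 1) (by omega) (by omega)))
      · obtain ⟨w, hw⟩ := hTilm_eq m g pL pR cL hm k heq
        have hGm : GB m g pL pR cL (k + 2)
            = hTil m g pL pR cL (k + 2)
              - (X ((k : ℕ) : Fin (m + 1)) - yPoly m (hHat g pL pR k))
              - (X (((k + 1 : ℕ)) : Fin (m + 1)) - yPoly m (hHat g pL pR (k + 1))) * w := by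
          have h0 : GB m g pL pR cL (k + 2)
              = yPoly m (hHat g pL pR m - Polynomial.C cL) := by
            rw [heq, GB_m_eq m g pL pR cL]
          rw [h0, hw]
          ring
        rw [hGm, ← GB_lt_eq m g pL pR cL (show k < m by omega),
          ← GB_lt_eq m g pL pR cL (show k + 1 < m by omega)]
        exact sub_mem (sub_mem (hTmem (k + 2) (by omega)) (IH k (by omega) (by omega)))
          (Ideal.mul_mem_right w _ (IH (k + 1) (by omega) (by omega)))

lemma span_GB_eq_span_hTil (hm : 3 ≤ m) :
    Ideal.span (GB m g pL pR cL '' Set.Iic m)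
      = Ideal.span (hTil m g pL pR cL '' Set.Iic m) := by
  apply le_antisymm
  · rw [Ideal.span_le]
    rintro x ⟨k, hk, rfl⟩
    exact GB_mem_spanT m g pL pR cL hm k hk
  · rw [Ideal.span_le]
    rintro x ⟨k, hk, rfl⟩
    exact hTil_mem_spanGB m g pL pR cL hm k hk

/-! ### the substitution homomorphism and the elimination ideal -/

lemma psiW_X_lt {k : ℕ} (hk : k < m) :
    psiW m g pL pR (X ((k : ℕ) : Fin (m + 1))) = hHat g pL pR k := by
  rw [psiW, aeval_X]
  rw [Fin.val_cast_of_lt (show k < m + 1 by omega), if_pos hk]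

lemma psiW_X_m : psiW m g pL pR (X ((m : ℕ) : Fin (m + 1))) = Polynomial.X := by
  rw [psiW, aeval_X]
  rw [Fin.val_cast_of_lt (show m < m + 1 by omega), if_neg (lt_irrefl m)]

lemma psiW_yPoly (q : Polynomial K) : psiW m g pL pR (yPoly m q) = q := by
  rw [yPoly, ← Polynomial.aeval_algHom_apply, psiW_X_m]
  rw [Polynomial.aeval_X_left, AlgHom.id_apply]

lemma psiW_GB_lt {k : ℕ} (hk : k < m) : psiW m g pL pR (GB m g pL pR cL k) = 0 := by
  rw [GB_lt_eq m g pL pR cL hk, map_sub, psiW_yPoly, psiW_X_lt m g pL pR hk, sub_self]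

lemma psiW_GB_m :
    psiW m g pL pR (GB m g pL pR cL m) = hHat g pL pR m - Polynomial.C cL := by
  rw [GB_m_eq m g pL pR cL, psiW_yPoly]

lemma psiW_mem_span (hm : 3 ≤ m) {f : MvPolynomial (Fin (m + 1)) K}
    (hf : f ∈ Ideal.span (GB m g pL pR cL '' Set.Iic m)) :
    psiW m g pL pR f ∈ Ideal.span {hHat g pL pR m - Polynomial.C cL} := by
  have h1 : psiW m g pL pR f
      ∈ Ideal.map (psiW m g pL pR) (Ideal.span (GB m g pL pR cL '' Set.Iic m)) :=
    Ideal.mem_map_of_mem _ hf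
  rw [Ideal.map_span] at h1
  refine Ideal.span_le.mpr ?_ h1
  rintro x ⟨y, ⟨k, hk, rfl⟩, rfl⟩
  rcases lt_or_eq_of_le (show k ≤ m from hk) with hlt | heq
  · rw [psiW_GB_lt m g pL pR cL hlt]
    exact Submodule.zero_mem _
  · rw [heq, psiW_GB_m m g pL pR cL]
    exact Ideal.subset_span rfl

lemma yPoly_mem_span (hm : 3 ≤ m) {q : Polynomial K}
    (hq : q ∈ Ideal.span {hHat g pL pR m - Polynomial.C cL}) :
    yPoly m q ∈ Ideal.span (GB m g pL pR cL '' Set.Iic m) := by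
  obtain ⟨r, hr⟩ := Ideal.mem_span_singleton.mp hq
  rw [hr, show yPoly m ((hHat g pL pR m - Polynomial.C cL) * r)
    = yPoly m (hHat g pL pR m - Polynomial.C cL) * yPoly m r from map_mul _ _ _,
    ← GB_m_eq m g pL pR cL]
  exact Ideal.mul_mem_right _ _ (GB_mem m g pL pR cL hm (le_refl m))

/-- a polynomial supported on pure powers of the last variable comes from `K[y]`. -/
lemma pure_eq_yPoly {f : MvPolynomial (Fin (m + 1)) K}
    (hpure : ∀ a ∈ f.support, ∀ j : Fin (m + 1), j ≠ ((m : ℕ) : Fin (m + 1)) → a j = 0) :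
    ∃ q : Polynomial K, f = yPoly m q ∧ ∀ n : ℕ,
      q.coeff n = f.coeff (Finsupp.single ((m : ℕ) : Fin (m + 1)) n) := by
  classical
  set my : Fin (m + 1) := ((m : ℕ) : Fin (m + 1)) with hmy
  set q : Polynomial K :=
    ∑ a ∈ f.support, Polynomial.monomial (a my) (f.coeff a) with hq
  have hform : ∀ a ∈ f.support, a = Finsupp.single my (a my) := by
    intro a ha
    ext j
    by_cases hj : j = my
    · subst hj; rw [Finsupp.single_eq_same]
    · rw [Finsupp.single_eq_of_ne' fun h => hj h.symm]
      exact hpure a ha j hj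
  have hyq : yPoly m q = f := by
    rw [hq, yPoly, map_sum]
    conv_rhs => rw [← support_sum_monomial_coeff f]
    refine Finset.sum_congr rfl fun a ha => ?_
    rw [Polynomial.aeval_monomial, MvPolynomial.algebraMap_eq, C_mul_X_pow_eq_monomial]
    exact congrArg (fun u => monomial u (coeff a f)) (hform a ha).symm
  refine ⟨q, hyq.symm, fun n => ?_⟩
  rw [← hyq, yPoly, coeff_aevalX]

/-! ### leading monomials of the basis elements -/

lemma mval : (((m : ℕ)) : Fin (m + 1)).val = m := Fin.val_cast_of_lt (by omega)

lemma eq_my_of_val {j : Fin (m + 1)} (h : (j : ℕ) = m) : j = ((m : ℕ) : Fin (m + 1)) := by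
  apply Fin.ext
  rw [mval m]
  exact h

lemma isLead_GB_lt (hm : 3 ≤ m) {k : ℕ} (hk : k < m) :
    GB m g pL pR cL k ≠ 0 ∧ IsLeadMono (lexLT sigDes) (GB m g pL pR cL k)
      (Finsupp.single ((k : ℕ) : Fin (m + 1)) 1) := by
  classical
  set k' : Fin (m + 1) := ((k : ℕ) : Fin (m + 1)) with hk'
  set my : Fin (m + 1) := ((m : ℕ) : Fin (m + 1)) with hmy
  have hkv : k'.val = k := Fin.val_cast_of_lt (by omega)
  have hkm' : k' ≠ my := by
    intro h
    have := congrArg Fin.val h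
    rw [hkv, mval m] at this
    omega
  have hyc : coeff (Finsupp.single k' 1) (yPoly m (hHat g pL pR k)) = 0 := by
    by_contra hcon
    obtain ⟨j, _, hj⟩ := support_aevalX my (hHat g pL pR k) (mem_support_iff.mpr hcon)
    have := DFunLike.congr_fun hj k'
    rw [Finsupp.single_eq_same, Finsupp.single_eq_of_ne' (Ne.symm hkm')] at this
    omega
  have hca : coeff (Finsupp.single k' 1) (GB m g pL pR cL k) = 1 := by
    rw [GB_lt_eq m g pL pR cL hk, coeff_sub, ← hk', coeff_X, hyc, sub_zero, if_pos rfl]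
  have hne : GB m g pL pR cL k ≠ 0 := fun h => by simp [h] at hca
  refine ⟨hne, mem_support_iff.mpr (by rw [hca]; exact one_ne_zero), ?_⟩
  intro b hb hba
  have hbc : coeff b (GB m g pL pR cL k) ≠ 0 := mem_support_iff.mp hb
  rw [GB_lt_eq m g pL pR cL hk, coeff_sub] at hbc
  have hbX : coeff b (X k' : MvPolynomial (Fin (m + 1)) K) = 0 := by
    rw [coeff_X', if_neg]
    intro h
    exact hba h.symm
  rw [hbX, zero_sub, neg_ne_zero] at hbc
  obtain ⟨j, _, hj⟩ := support_aevalX my (hHat g pL pR k) (mem_support_iff.mpr hbc)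
  refine ⟨k', ?_, ?_⟩
  · rw [hj, Finsupp.single_eq_same, Finsupp.single_eq_of_ne' (Ne.symm hkm')]
    omega
  · intro j' hj'
    have hj'k : j' < k' := hj'
    have hj'm : j' ≠ my := by
      intro h
      rw [h] at hj'k
      have := Fin.lt_iff_val_lt_val.mp hj'k
      rw [mval m, hkv] at this
      omega
    have hj'k' : j' ≠ k' := ne_of_lt hj'k
    rw [hj, Finsupp.single_eq_of_ne' (Ne.symm hj'm), Finsupp.single_eq_of_ne' (Ne.symm hj'k')]

lemma isLead_GB_m (hm : 3 ≤ m) (hmh0 : hHat g pL pR m - Polynomial.C cL ≠ 0) :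
    GB m g pL pR cL m ≠ 0 ∧ IsLeadMono (lexLT sigDes) (GB m g pL pR cL m)
      (Finsupp.single ((m : ℕ) : Fin (m + 1))
        (hHat g pL pR m - Polynomial.C cL).natDegree) := by
  classical
  set my : Fin (m + 1) := ((m : ℕ) : Fin (m + 1)) with hmy
  set q := hHat g pL pR m - Polynomial.C cL with hq
  set D := q.natDegree with hD
  have hca : coeff (Finsupp.single my D) (GB m g pL pR cL m) = q.leadingCoeff := by
    rw [GB_m_eq m g pL pR cL, yPoly, ← hq, coeff_aevalX, hD, Polynomial.coeff_natDegree]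
  have hlc : q.leadingCoeff ≠ 0 := Polynomial.leadingCoeff_ne_zero.mpr hmh0
  have hne : GB m g pL pR cL m ≠ 0 := fun h => by rw [h, coeff_zero] at hca; exact hlc hca.symm
  refine ⟨hne, mem_support_iff.mpr (by rw [hca]; exact hlc), ?_⟩
  intro b hb hba
  rw [GB_m_eq m g pL pR cL, yPoly, ← hq] at hb
  obtain ⟨j, hjs, hj⟩ := support_aevalX my q hb
  have hjD : j ≤ D := Polynomial.le_natDegree_of_ne_zero (Polynomial.mem_support_iff.mp hjs)
  have hjD' : j ≠ D := by
    intro h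
    exact hba (by rw [hj, h])
  refine ⟨my, ?_, ?_⟩
  · rw [hj, Finsupp.single_eq_same, Finsupp.single_eq_same]
    omega
  · intro j' hj'
    have hj'k : j' < my := hj'
    have hj'm : j' ≠ my := ne_of_lt hj'k
    rw [hj, Finsupp.single_eq_of_ne' (Ne.symm hj'm), Finsupp.single_eq_of_ne' (Ne.symm hj'm)]

lemma gb_initial (hm : 3 ≤ m) (hmh0 : hHat g pL pR m - Polynomial.C cL ≠ 0) :
    Ideal.span {mf | ∃ gb ∈ GB m g pL pR cL '' Set.Iic m, gb ≠ 0 ∧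
        ∃ a, IsLeadMono (lexLT sigDes) gb a ∧ mf = monomial a (1 : K)}
      = initialIdeal (lexLT sigDes) (Ideal.span (hTil m g pL pR cL '' Set.Iic m)) := by
  classical
  set my : Fin (m + 1) := ((m : ℕ) : Fin (m + 1)) with hmy
  set q0 := hHat g pL pR m - Polynomial.C cL with hq0
  apply le_antisymm
  · rw [Ideal.span_le]
    rintro x ⟨gb, ⟨k, hk, rfl⟩, hgb0, a, hlead, rfl⟩
    exact Ideal.subset_span
      ⟨GB m g pL pR cL k, GB_mem_spanT m g pL pR cL hm k hk, hgb0, a, hlead, rfl⟩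
  · rw [initialIdeal, Ideal.span_le]
    rintro x ⟨f, hfI, hf0, a, hlead, rfl⟩
    by_cases hcase : ∃ j : Fin (m + 1), j ≠ my ∧ a j ≠ 0
    · obtain ⟨j, hjm, hja⟩ := hcase
      have hjne : (j : ℕ) ≠ m := fun h => hjm (eq_my_of_val m h)
      have hjv : (j : ℕ) < m := by
        have := j.isLt
        omega
      obtain ⟨hne, hlead'⟩ := isLead_GB_lt m g pL pR cL hm hjv
      have hjj : (((j : ℕ) : ℕ) : Fin (m + 1)) = j := Fin.cast_val_eq_self j
      rw [hjj] at hlead'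
      have hsle : Finsupp.single j 1 ≤ a := Finsupp.single_le_iff.mpr (by omega)
      have hdecomp : monomial a (1 : K)
          = monomial (Finsupp.single j 1) 1 * monomial (a - Finsupp.single j 1) 1 := by
        rw [monomial_mul, one_mul, add_tsub_cancel_of_le hsle]
      rw [hdecomp]
      refine Ideal.mul_mem_right _ _ (Ideal.subset_span ?_)
      exact ⟨GB m g pL pR cL (j : ℕ), ⟨(j : ℕ), le_of_lt hjv, rfl⟩, hne,
        Finsupp.single j 1, hlead', rfl⟩
    · push_neg at hcase
      have hpure : ∀ b ∈ f.support, ∀ j : Fin (m + 1), j ≠ my → b j = 0 := by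
        intro b hb j hjm
        by_contra hbj
        have hba : b ≠ a := fun h => by rw [h] at hbj; exact hbj (hcase j hjm)
        obtain ⟨i, hbi, hprev⟩ := hlead.2 b hb hba
        have him : i = my := by
          by_contra hcon
          rw [hcase i hcon] at hbi
          omega
        have hjlt : j < my := by
          rw [Fin.lt_iff_val_lt_val, mval m]
          have h1 : (j : ℕ) ≠ m := fun h => hjm (eq_my_of_val m h)
          have := j.isLt
          omega
        have hbj' := hprev j (by rw [him]; exact hjlt)
        rw [hcase j hjm] at hbj'
        exact hbj hbj'
      obtain ⟨q, hfq, hcoef⟩ := pure_eq_yPoly m (f := f) hpure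
      have hq0dvd : q0 ∣ q := by
        have h1 : psiW m g pL pR f ∈ Ideal.span {q0} := by
          apply psiW_mem_span m g pL pR cL hm
          rw [span_GB_eq_span_hTil m g pL pR cL hm]
          exact hfI
        rw [hfq, psiW_yPoly] at h1
        exact Ideal.mem_span_singleton.mp h1
      have hqne : q ≠ 0 := fun h => hf0 (by rw [hfq, h, yPoly, map_zero])
      have hDq : q0.natDegree ≤ q.natDegree := Polynomial.natDegree_le_of_dvd hq0dvd hqne
      have hay : a = Finsupp.single my (a my) := by
        ext j
        by_cases hj : j = my
        · rw [hj, Finsupp.single_eq_same]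
        · rw [Finsupp.single_eq_of_ne' fun h => hj h.symm, hcase j hj]
      have h1 : q.coeff (a my) ≠ 0 := by
        rw [hcoef (a my), ← hay]
        exact mem_support_iff.mp hlead.1
      have hale : a my ≤ q.natDegree := Polynomial.le_natDegree_of_ne_zero h1
      have hbmem : Finsupp.single my q.natDegree ∈ f.support := by
        rw [mem_support_iff, ← hcoef q.natDegree, Polynomial.coeff_natDegree]
        exact Polynomial.leadingCoeff_ne_zero.mpr hqne
      have haeq : a my = q.natDegree := by
        by_cases hba : Finsupp.single my q.natDegree = a
        · have := DFunLike.congr_fun hba my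
          rw [Finsupp.single_eq_same] at this
          omega
        · obtain ⟨i, hbi, _⟩ := hlead.2 _ hbmem hba
          have him : i = my := by
            by_contra hcon
            rw [hcase i hcon] at hbi
            omega
          rw [him, Finsupp.single_eq_same] at hbi
          omega
      obtain ⟨hne, hlead'⟩ := isLead_GB_m m g pL pR cL hm hmh0
      have hsle : Finsupp.single my q0.natDegree ≤ a := Finsupp.single_le_iff.mpr (by omega)
      have hdecomp : monomial a (1 : K)
          = monomial (Finsupp.single my q0.natDegree) 1
            * monomial (a - Finsupp.single my q0.natDegree) 1 := by
        rw [monomial_mul, one_mul, add_tsub_cancel_of_le hsle]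
      rw [hdecomp]
      refine Ideal.mul_mem_right _ _ (Ideal.subset_span ?_)
      exact ⟨GB m g pL pR cL m, ⟨m, le_refl m, rfl⟩, hne,
        Finsupp.single my q0.natDegree, hlead', rfl⟩

end FeistelDeg

/-- (`n = m + 1 ≥ 4`.) The polynomials
`x_{R,2} - ĥ_1, …, x_{R,n-1} - ĥ_{n-2}, x_{L,n-1} - ĥ_{n-1}, ĥ_n` form a LEX Gröbner basis of
the ideal generated by the downsized Feistel system, `deg ĥ_i = ∏_{k=1}^i d_k`, and the
elimination ideal `(H) ∩ K[y]` is generated by `ĥ_n`. -/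
theorem stmt_12 {K : Type*} [Field K] (m : ℕ) (hm : 3 ≤ m)
    (g : ℕ → MvPolynomial (Fin 2) K) (pL pR cL cR : K)
    (hgnc : ∀ k ≤ m, 0 < (g k).totalDegree)
    (hzero : ∃ z : Fin (2 * m + 1) → K, ∀ k ≤ m,
      eval z (fstL m g pL pR cL k) = 0 ∧ eval z (fstR m pL cR k) = 0)
    (hdeg : ∀ k ≤ m, 2 ≤ (fstL m g pL pR cL k).totalDegree)
    (hmon : ∀ k, 1 ≤ k → k ≤ m →
      (fstL m g pL pR cL k).coeff (Finsupp.single (((2 * (k - 1) : ℕ)) : Fin (2 * m + 1))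
        ((fstL m g pL pR cL k).totalDegree)) ≠ 0) :
    IsGroebner (lexLT sigDes)
      ((fun k => if k < m then X ((k : ℕ) : Fin (m + 1)) - yPoly m (hHat g pL pR k)
        else yPoly m (hHat g pL pR m - Polynomial.C cL)) '' Set.Iic m)
      (Ideal.span ((hTil m g pL pR cL) '' Set.Iic m))
    ∧ (∀ k ≤ m, (if k < m then hHat g pL pR k else hHat g pL pR m - Polynomial.C cL).natDegree
        = ∏ j ∈ Finset.range (k + 1), (fstL m g pL pR cL j).totalDegree)
    ∧ Ideal.comap
        (Polynomial.aeval (X ((m : ℕ) : Fin (m + 1)) : MvPolynomial (Fin (m + 1)) K))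
        (Ideal.span ((hTil m g pL pR cL) '' Set.Iic m))
      = Ideal.span {hHat g pL pR m - Polynomial.C cL} := by
  classical
  have hdegs := hHat_deg m g pL pR cL hm hdeg hmon
  have hDm2 : 2 ≤ (hHat g pL pR m).natDegree := (hdegs m (le_refl m)).2
  have hmhdeg : (hHat g pL pR m - Polynomial.C cL).natDegree = (hHat g pL pR m).natDegree :=
    Polynomial.natDegree_sub_C
  have hmh0 : hHat g pL pR m - Polynomial.C cL ≠ 0 := by
    intro h
    rw [h, Polynomial.natDegree_zero] at hmhdeg
    omega
  have hGBfun : (fun k => if k < m then X ((k : ℕ) : Fin (m + 1)) - yPoly m (hHat g pL pR k)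
      else yPoly m (hHat g pL pR m - Polynomial.C cL)) = GB m g pL pR cL := rfl
  refine ⟨?_, ?_, ?_⟩
  · rw [hGBfun]
    refine ⟨?_, ?_⟩
    · rintro x ⟨k, hk, rfl⟩
      exact GB_mem_spanT m g pL pR cL hm k hk
    · exact gb_initial m g pL pR cL hm hmh0
  · intro k hk
    rcases lt_or_eq_of_le hk with hlt | heq
    · rw [if_pos hlt]
      exact (hdegs k hk).1
    · rw [heq, if_neg (lt_irrefl m), hmhdeg]
      exact (hdegs m (le_refl m)).1
  · ext q
    rw [Ideal.mem_comap]
    constructor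
    · intro hq
      have hq' : yPoly m q ∈ Ideal.span (hTil m g pL pR cL '' Set.Iic m) := hq
      have h2 : psiW m g pL pR (yPoly m q)
          ∈ Ideal.span {hHat g pL pR m - Polynomial.C cL} := by
        apply psiW_mem_span m g pL pR cL hm
        rw [span_GB_eq_span_hTil m g pL pR cL hm]
        exact hq'
      rwa [psiW_yPoly] at h2
    · intro hq
      have h2 := yPoly_mem_span m g pL pR cL hm hq
      rw [span_GB_eq_span_hTil m g pL pR cL hm] at h2
      exact h2
end

section
/- Let K be a field and let F = {f_1,…,f_m} ⊆ P = K[x_1,…,x_n] be a polynomial system. Then: (a) if the set D = {d ≥ 1 : W_{F,d} ∩ P_{≤d−1} ≠ W_{F,d−1}} is nonempty and bounded above, then the last fall degree d_F equals max D; (b) d_F ≥ sup{d_f : f ∈ (F) with d_f > deg f}; (c) if d_F < ∞ and some f ∈ (F) has a degree fall, then d_F = max{d_f : f ∈ (F) with d_f > deg f}. -/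
open MvPolynomial
open Fin.NatCast

section Stmt15Helpers

variable {σ K ι : Type*} [CommSemiring K] [Fintype ι] {F : ι → MvPolynomial σ K}

theorem Wsp_mono' {d d' : ℕ} (h : d ≤ d') : Wsp F d ⊆ Wsp F d' := by
  rintro f ⟨g, rfl, hg⟩
  exact ⟨g, rfl, fun i => (hg i).trans h⟩

theorem Wsp_totalDegree' {d : ℕ} {f : MvPolynomial σ K} (h : f ∈ Wsp F d) :
    f.totalDegree ≤ d := by
  obtain ⟨g, rfl, hg⟩ := h
  exact (MvPolynomial.totalDegree_finset_sum _ _).trans (Finset.sup_le fun i _ => hg i)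

theorem Wsp_subset_span' {d : ℕ} :
    Wsp F d ⊆ (Ideal.span (Set.range F) : Set (MvPolynomial σ K)) := by
  rintro f ⟨g, rfl, hg⟩
  exact Ideal.sum_mem _ fun i _ => Ideal.mul_mem_left _ _ (Ideal.subset_span ⟨i, rfl⟩)

theorem exists_Wsp' {f : MvPolynomial σ K} (h : f ∈ Ideal.span (Set.range F)) :
    ∃ d, f ∈ Wsp F d := by
  obtain ⟨g, hg⟩ := (Submodule.mem_span_range_iff_exists_fun _).mp h
  refine ⟨Finset.univ.sup fun i => (g i * F i).totalDegree, g, ?_,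
    fun i => Finset.le_sup (f := fun i => (g i * F i).totalDegree) (Finset.mem_univ i)⟩
  rw [← hg]
  simp [smul_eq_mul]

end Stmt15Helpers

/-- Characterizations of the last fall degree: (a) if the set of degrees `d`
with `W_{F,d} ∩ P_{≤ d-1} ≠ W_{F,d-1}` is nonempty and bounded above, the last fall degree is
its maximum; (b) the last fall degree dominates every degree fall; (c) if the last fall degree
is finite and a degree fall exists, it equals the largest degree fall. -/
theorem stmt_15 {K : Type*} [Field K] {nv mI : ℕ}
    (F : Fin mI → MvPolynomial (Fin nv) K) :
    ((({d : ℕ | 1 ≤ d ∧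
        Wsp F d ∩ {f | f.totalDegree ≤ d - 1} ≠ Wsp F (d - 1)} : Set ℕ).Nonempty →
      BddAbove {d : ℕ | 1 ≤ d ∧ Wsp F d ∩ {f | f.totalDegree ≤ d - 1} ≠ Wsp F (d - 1)} →
      lastFall F = ((sSup {d : ℕ | 1 ≤ d ∧
        Wsp F d ∩ {f | f.totalDegree ≤ d - 1} ≠ Wsp F (d - 1)} : ℕ) : ℕ∞)))
    ∧ sSup {e : ℕ∞ | ∃ f ∈ Ideal.span (Set.range F),
        e = ((dfall F f : ℕ) : ℕ∞) ∧ f.totalDegree < dfall F f} ≤ lastFall F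
    ∧ (lastFall F ≠ ⊤ →
        (∃ f ∈ Ideal.span (Set.range F), f.totalDegree < dfall F f) →
        lastFall F = sSup {e : ℕ∞ | ∃ f ∈ Ideal.span (Set.range F),
          e = ((dfall F f : ℕ) : ℕ∞) ∧ f.totalDegree < dfall F f}) := by
  classical
  have hWd : ∀ f ∈ Ideal.span (Set.range F), f ∈ Wsp F (dfall F f) := fun f hf =>
    Nat.sInf_mem (exists_Wsp' hf)
  have hle : ∀ {f : MvPolynomial (Fin nv) K} {d : ℕ}, f ∈ Wsp F d → dfall F f ≤ d :=
    fun hf => Nat.sInf_le hf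
  -- characterization of membership in the set defining `lastFall`
  have hmem : ∀ e : ℕ, ((e : ℕ∞) ∈ {d : ℕ∞ | ∀ e' : ℕ, d = (e' : ℕ∞) →
      ∀ f ∈ Ideal.span (Set.range F), f ∈ Wsp F (max e' f.totalDegree)} ↔
      ∀ f ∈ Ideal.span (Set.range F), f.totalDegree < dfall F f → dfall F f ≤ e) := by
    intro e
    constructor
    · intro h f hf hfall
      have h2 := hle (h e rfl f hf)
      omega
    · intro h e' he' f hf
      obtain rfl : e = e' := Nat.cast_injective he'
      by_cases hfall : f.totalDegree < dfall F f
      · exact Wsp_mono' (le_max_of_le_left (h f hf hfall)) (hWd f hf)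
      · exact Wsp_mono' (le_max_of_le_right (not_lt.mp hfall)) (hWd f hf)
  have hLF : lastFall F = sInf {d : ℕ∞ | ∀ e' : ℕ, d = (e' : ℕ∞) →
      ∀ f ∈ Ideal.span (Set.range F), f ∈ Wsp F (max e' f.totalDegree)} := rfl
  -- part (b)
  have partb : sSup {e : ℕ∞ | ∃ f ∈ Ideal.span (Set.range F),
      e = ((dfall F f : ℕ) : ℕ∞) ∧ f.totalDegree < dfall F f} ≤ lastFall F := by
    rw [hLF]
    refine le_sInf fun a ha => ?_
    induction a using ENat.recTopCoe with
    | top => exact le_top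
    | coe e =>
      refine sSup_le ?_
      rintro x ⟨f, hf, rfl, hfall⟩
      exact_mod_cast (hmem e).mp ha f hf hfall
  refine ⟨?_, partb, ?_⟩
  · -- part (a)
    intro hne hbdd
    have hmemD := Nat.sSup_mem hne hbdd
    set dM := sSup {d : ℕ | 1 ≤ d ∧
      Wsp F d ∩ {f | f.totalDegree ≤ d - 1} ≠ Wsp F (d - 1)} with hdM
    obtain ⟨hd1, hdne⟩ := hmemD
    have hsub : Wsp F (dM - 1) ⊆ Wsp F dM ∩ {f | f.totalDegree ≤ dM - 1} :=
      fun f hf => ⟨Wsp_mono' (Nat.sub_le _ _) hf, Wsp_totalDegree' hf⟩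
    obtain ⟨f0, hf0mem, hf0not⟩ := Set.exists_of_ssubset (hsub.ssubset_of_ne (Ne.symm hdne))
    obtain ⟨hf0W, hf0deg⟩ := hf0mem
    have hf0span : f0 ∈ Ideal.span (Set.range F) := Wsp_subset_span' hf0W
    have hdf0 : dfall F f0 = dM := by
      refine le_antisymm (hle hf0W) ?_
      by_contra h
      push_neg at h
      exact hf0not (Wsp_mono' (by omega) (hWd f0 hf0span))
    have hf0deg' : f0.totalDegree ≤ dM - 1 := hf0deg
    have hf0fall : f0.totalDegree < dfall F f0 := by omega
    -- every degree fall lies in D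
    have hfalls : ∀ f ∈ Ideal.span (Set.range F),
        f.totalDegree < dfall F f → dfall F f ≤ dM := by
      intro f hf hfall
      refine le_csSup hbdd ⟨by omega, ?_⟩
      intro heq
      have hf1 : f ∈ Wsp F (dfall F f) ∩ {g | g.totalDegree ≤ dfall F f - 1} :=
        ⟨hWd f hf, by simp only [Set.mem_setOf_eq]; omega⟩
      rw [heq] at hf1
      have := hle hf1
      omega
    refine le_antisymm ?_ ?_
    · rw [hLF]
      exact sInf_le ((hmem dM).mpr hfalls)
    · rw [hLF]
      refine le_sInf fun a ha => ?_
      induction a using ENat.recTopCoe with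
      | top => exact le_top
      | coe e =>
        have := (hmem e).mp ha f0 hf0span hf0fall
        exact_mod_cast by omega
  · -- part (c)
    intro htop hex
    refine le_antisymm ?_ partb
    obtain ⟨a, ha, hane⟩ : ∃ a ∈ {d : ℕ∞ | ∀ e' : ℕ, d = (e' : ℕ∞) →
        ∀ f ∈ Ideal.span (Set.range F), f ∈ Wsp F (max e' f.totalDegree)}, a ≠ ⊤ := by
      by_contra h
      push_neg at h
      exact htop (hLF ▸ sInf_eq_top.mpr h)
    lift a to ℕ using hane with e
    have hQ := (hmem e).mp ha
    set S := sSup {e : ℕ∞ | ∃ f ∈ Ideal.span (Set.range F),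
      e = ((dfall F f : ℕ) : ℕ∞) ∧ f.totalDegree < dfall F f} with hS
    have hSle : S ≤ (e : ℕ∞) := by
      refine sSup_le ?_
      rintro x ⟨f, hf, rfl, hfall⟩
      exact_mod_cast hQ f hf hfall
    have hSne : S ≠ ⊤ := fun h => by simp [h] at hSle
    obtain ⟨s, hs⟩ : ∃ s : ℕ, S = (s : ℕ∞) := ⟨S.toNat, (ENat.coe_toNat hSne).symm⟩
    rw [hs, hLF]
    refine sInf_le ((hmem s).mpr ?_)
    intro f hf hfall
    have : ((dfall F f : ℕ) : ℕ∞) ≤ S := le_sSup ⟨f, hf, rfl, hfall⟩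
    rw [hs] at this
    exact_mod_cast this
end
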